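/- arXiv:1403.5873 — 5 statements merged into one kernel-verified Lean document; each statement's English description precedes it below -/
import Mathlib

section
/- In a regular multi-pointed category with kernels, a morphism f: X → Y is saturating if and only if Δ_Y* = f* f∘ (as composites of relations). -/
open CategoryTheory CategoryTheory.Limits

universe v u

namespace Paper

variable {𝒞 : Type u} [Category.{v} 𝒞]

/-- `f` is a regular epimorphism: it is a coequaliser of some pair of morphisms. -/
def IsRegEpi {X Y : 𝒞} (f : X ⟶ Y) : Prop :=
  ∃ (Z : 𝒞) (a b : Z ⟶ X), a ≫ f = b ≫ f ∧
    ∀ {T : 𝒞} (h : X ⟶ T), a ≫ h = b ≫ h → ∃! u : Y ⟶ T, f ≫ u = h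

/-- Regular epimorphisms are pullback-stable. -/
def RegEpisStable (𝒞 : Type u) [Category.{v} 𝒞] : Prop :=
  ∀ {P X Y Z : 𝒞} (p₁ : P ⟶ X) (p₂ : P ⟶ Y) (f : X ⟶ Z) (g : Y ⟶ Z),
    IsPullback p₁ p₂ f g → IsRegEpi g → IsRegEpi p₁

/-- Every kernel pair admits a coequaliser. -/
def KernelPairsHaveCoequalisers (𝒞 : Type u) [Category.{v} 𝒞] : Prop :=
  ∀ {R X Y : 𝒞} (f : X ⟶ Y) (a b : R ⟶ X), IsKernelPair f a b →
    ∃ (Q : 𝒞) (q : X ⟶ Q), a ≫ q = b ≫ q ∧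
      ∀ {T : 𝒞} (h : X ⟶ T), a ≫ h = b ≫ h → ∃! u : Q ⟶ T, q ≫ u = h

/-- A relation from `X` to `Y`: a jointly monomorphic span. -/
structure Rel (𝒞 : Type u) [Category.{v} 𝒞] (X Y : 𝒞) where
  R : 𝒞
  p1 : R ⟶ X
  p2 : R ⟶ Y
  jm : ∀ {Z : 𝒞} (a b : Z ⟶ R), a ≫ p1 = b ≫ p1 → a ≫ p2 = b ≫ p2 → a = b

variable {X Y Z : 𝒞}

/-- `ρ` is a subrelation of `σ`. -/
def Rel.le (ρ σ : Rel 𝒞 X Y) : Prop :=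
  ∃ j : ρ.R ⟶ σ.R, j ≫ σ.p1 = ρ.p1 ∧ j ≫ σ.p2 = ρ.p2

/-- `ρ` and `σ` are the same relation (isomorphic as subobjects of `X × Y`). -/
def Rel.equiv (ρ σ : Rel 𝒞 X Y) : Prop := ρ.le σ ∧ σ.le ρ

/-- The opposite relation. -/
def Rel.op (ρ : Rel 𝒞 X Y) : Rel 𝒞 Y X :=
  ⟨ρ.R, ρ.p2, ρ.p1, fun a b h2 h1 => ρ.jm a b h1 h2⟩

/-- A morphism viewed as a relation. -/
def homRel (f : X ⟶ Y) : Rel 𝒞 X Y :=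
  ⟨X, 𝟙 X, f, fun a b h _ => by simpa using h⟩

/-- The discrete (diagonal) relation on `X`. -/
def diagRel (X : 𝒞) : Rel 𝒞 X X := homRel (𝟙 X)

/-- The kernel pair `Eq(f)` of `f` as a relation on `X`. -/
noncomputable def kerPairRel [HasPullbacks 𝒞] (f : X ⟶ Y) : Rel 𝒞 X X :=
  ⟨pullback f f, pullback.fst f f, pullback.snd f f,
    fun a b h1 h2 => pullback.hom_ext h1 h2⟩

/-- `τ` is the composite `σρ` (first `ρ` from `X` to `Y`, then `σ` from `Y` to `Z`),
i.e. the (regular epi, jointly mono) factorisation of the span induced on the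
pullback of `ρ.p2` and `σ.p1`. -/
def IsRelComp [HasPullbacks 𝒞] (σ : Rel 𝒞 Y Z) (ρ : Rel 𝒞 X Y) (τ : Rel 𝒞 X Z) : Prop :=
  ∃ e : pullback ρ.p2 σ.p1 ⟶ τ.R, IsRegEpi e ∧
    e ≫ τ.p1 = pullback.fst ρ.p2 σ.p1 ≫ ρ.p1 ∧
    e ≫ τ.p2 = pullback.snd ρ.p2 σ.p1 ≫ σ.p2

def Rel.IsReflexive (ρ : Rel 𝒞 X X) : Prop :=
  ∃ r : X ⟶ ρ.R, r ≫ ρ.p1 = 𝟙 X ∧ r ≫ ρ.p2 = 𝟙 X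

def Rel.IsSymmetric (ρ : Rel 𝒞 X X) : Prop :=
  ∃ s : ρ.R ⟶ ρ.R, s ≫ ρ.p1 = ρ.p2 ∧ s ≫ ρ.p2 = ρ.p1

def Rel.IsTransitive [HasPullbacks 𝒞] (ρ : Rel 𝒞 X X) : Prop :=
  ∃ t : pullback ρ.p2 ρ.p1 ⟶ ρ.R,
    t ≫ ρ.p1 = pullback.fst ρ.p2 ρ.p1 ≫ ρ.p1 ∧
    t ≫ ρ.p2 = pullback.snd ρ.p2 ρ.p1 ≫ ρ.p2

def Rel.IsEquivalence [HasPullbacks 𝒞] (ρ : Rel 𝒞 X X) : Prop :=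
  ρ.IsReflexive ∧ ρ.IsSymmetric ∧ ρ.IsTransitive

/-- A finitely complete category is a Mal'tsev category when every reflexive
relation in it is an equivalence relation. -/
def IsMaltsev (𝒞 : Type u) [Category.{v} 𝒞] [HasPullbacks 𝒞] : Prop :=
  ∀ {X : 𝒞} (ρ : Rel 𝒞 X X), ρ.IsReflexive → ρ.IsEquivalence

/-- A square of type (1): split epimorphisms `f` (with section `s`) and `g`
(with section `t`), regular epimorphisms `c` and `d`, with `f·c = d·g` and
`s·d = c·t`. -/
structure IsSquare1 {A B E D : 𝒞} (f : A ⟶ B) (s : B ⟶ A) (g : E ⟶ D) (t : D ⟶ E)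
    (c : E ⟶ A) (d : D ⟶ B) : Prop where
  sec_f : s ≫ f = 𝟙 B
  sec_g : t ≫ g = 𝟙 D
  regepi_c : IsRegEpi c
  regepi_d : IsRegEpi d
  comm1 : c ≫ f = g ≫ d
  comm2 : d ≫ s = t ≫ c

/-- `N` is an ideal of morphisms. -/
def IsIdeal (N : MorphismProperty 𝒞) : Prop :=
  ∀ {X Y Z : 𝒞} (f : X ⟶ Y) (g : Y ⟶ Z), N f ∨ N g → N (f ≫ g)

/-- `n` is an `N`-kernel of `f`. -/
def IsNKernel (N : MorphismProperty 𝒞) {X Y K : 𝒞} (f : X ⟶ Y) (n : K ⟶ X) : Prop :=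
  N (n ≫ f) ∧ ∀ {Z : 𝒞} (m : Z ⟶ X), N (m ≫ f) → ∃! u : Z ⟶ K, u ≫ n = m

/-- Every morphism admits an `N`-kernel. -/
def HasNKernels (N : MorphismProperty 𝒞) : Prop :=
  ∀ {X Y : 𝒞} (f : X ⟶ Y), ∃ (K : 𝒞) (n : K ⟶ X), IsNKernel N f n

/-- `τ` is the largest star subrelation `ρ*` of the relation `ρ`. -/
def IsLargestStarSub (N : MorphismProperty 𝒞) (ρ τ : Rel 𝒞 X Y) : Prop :=
  τ.le ρ ∧ N τ.p1 ∧ ∀ σ : Rel 𝒞 X Y, σ.le ρ → N σ.p1 → σ.le τ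

/-- `(s1, s2)` is the star-kernel of `f`: the universal star coequalised by `f`. -/
def IsStarKernel (N : MorphismProperty 𝒞) {S X Y : 𝒞} (f : X ⟶ Y) (s1 s2 : S ⟶ X) : Prop :=
  N s1 ∧ s1 ≫ f = s2 ≫ f ∧
    ∀ {T : 𝒞} (t1 t2 : T ⟶ X), N t1 → t1 ≫ f = t2 ≫ f →
      ∃! u : T ⟶ S, u ≫ s1 = t1 ∧ u ≫ s2 = t2

/-- `(ν1, ν2)` is the star of the pullback relation of `(g, δ)`: the universal
pair with `ν1 ∈ N` and `δ·ν1 = g·ν2`. -/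
def IsStarPullbackRel (N : MorphismProperty 𝒞) {W E D P : 𝒞} (δ : W ⟶ D) (g : E ⟶ D)
    (ν1 : P ⟶ W) (ν2 : P ⟶ E) : Prop :=
  N ν1 ∧ ν1 ≫ δ = ν2 ≫ g ∧
    ∀ {T : 𝒞} (t1 : T ⟶ W) (t2 : T ⟶ E), N t1 → t1 ≫ δ = t2 ≫ g →
      ∃! u : T ⟶ P, u ≫ ν1 = t1 ∧ u ≫ ν2 = t2

/-- `f` is a coequaliser of `(s1, s2)`. -/
def IsCoeqOf {S X Y : 𝒞} (f : X ⟶ Y) (s1 s2 : S ⟶ X) : Prop :=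
  s1 ≫ f = s2 ≫ f ∧ ∀ {T : 𝒞} (h : X ⟶ T), s1 ≫ h = s2 ≫ h → ∃! u : Y ⟶ T, f ≫ u = h

/-- Star-regularity: every regular epimorphism is a coequaliser of a star. -/
def StarRegular (𝒞 : Type u) [Category.{v} 𝒞] (N : MorphismProperty 𝒞) : Prop :=
  ∀ {X Y : 𝒞} (f : X ⟶ Y), IsRegEpi f →
    ∃ (S : 𝒞) (s1 s2 : S ⟶ X), N s1 ∧ IsCoeqOf f s1 s2

/-- `f` is saturating: the induced morphism between the `N`-kernels of the
identities is a regular epimorphism. -/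
def Saturating (N : MorphismProperty 𝒞) {X Y : 𝒞} (f : X ⟶ Y) : Prop :=
  ∀ {KX KY : 𝒞} (nX : KX ⟶ X) (nY : KY ⟶ Y), IsNKernel N (𝟙 X) nX → IsNKernel N (𝟙 Y) nY →
    ∀ u : KX ⟶ KY, u ≫ nY = nX ≫ f → IsRegEpi u

/-- `X` is an `N`-trivial object. -/
def NTrivial (N : MorphismProperty 𝒞) (X : 𝒞) : Prop := N (𝟙 X)

/-- The multi-pointed category has enough trivial objects: `N` is a closed ideal and
`N`-trivial objects are closed under subobjects and squares. -/
def EnoughTrivialObjects [HasBinaryProducts 𝒞] (N : MorphismProperty 𝒞) : Prop :=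
  (∀ {X Y : 𝒞} (f : X ⟶ Y), N f → ∃ (T : 𝒞) (p : X ⟶ T) (q : T ⟶ Y),
      NTrivial N T ∧ p ≫ q = f) ∧
  (∀ {S X : 𝒞} (m : S ⟶ X), Mono m → NTrivial N X → NTrivial N S) ∧
  (∀ X : 𝒞, NTrivial N X → NTrivial N (X ⨯ X))

/-- A square of type (1) is a star-regular pushout when `(c g°)* = f° d*`. -/
def IsStarRegularPushout [HasPullbacks 𝒞] (N : MorphismProperty 𝒞) {A B E D : 𝒞}
    (f : A ⟶ B) (g : E ⟶ D) (c : E ⟶ A) (d : D ⟶ B) : Prop :=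
  ∀ (ρ τ μ : Rel 𝒞 D A) (ds : Rel 𝒞 D B),
    IsRelComp (homRel c) (Rel.op (homRel g)) ρ → IsLargestStarSub N ρ τ →
    IsLargestStarSub N (homRel d) ds → IsRelComp (Rel.op (homRel f)) ds μ →
    τ.equiv μ

/-- 2-star-permutability: `Eq(f) Eq(g)* = Eq(g) Eq(f)*` for all regular
epimorphisms `f`, `g` with the same domain. -/
def TwoStarPermutable (𝒞 : Type u) [Category.{v} 𝒞] [HasPullbacks 𝒞]
    (N : MorphismProperty 𝒞) : Prop :=
  ∀ {X Y Z : 𝒞} (f : X ⟶ Y) (g : X ⟶ Z), IsRegEpi f → IsRegEpi g →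
    ∀ (sf sg : Rel 𝒞 X X), IsLargestStarSub N (kerPairRel f) sf →
      IsLargestStarSub N (kerPairRel g) sg →
    ∀ (τ₁ τ₂ : Rel 𝒞 X X), IsRelComp (kerPairRel f) sg τ₁ →
      IsRelComp (kerPairRel g) sf τ₂ → τ₁.equiv τ₂

section Pointed

variable [HasZeroMorphisms 𝒞]

/-- `k` is a kernel of `f`. -/
def IsKernelOf {K X Y : 𝒞} (k : K ⟶ X) (f : X ⟶ Y) : Prop :=
  k ≫ f = 0 ∧ ∀ {Z : 𝒞} (m : Z ⟶ X), m ≫ f = 0 → ∃! u : Z ⟶ K, u ≫ k = m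

/-- `f` is a cokernel of `k`. -/
def IsCokernelOf {X Y K : 𝒞} (f : X ⟶ Y) (k : K ⟶ X) : Prop :=
  k ≫ f = 0 ∧ ∀ {T : 𝒞} (h : X ⟶ T), k ≫ h = 0 → ∃! u : Y ⟶ T, f ≫ u = h

/-- Short exact sequence `K → X ↠ Y`. -/
def IsShortExact {K X Y : 𝒞} (k : K ⟶ X) (f : X ⟶ Y) : Prop :=
  IsKernelOf k f ∧ IsCokernelOf f k

/-- Subtractivity: every reflexive, left punctual relation is right punctual. -/
def IsSubtractive (𝒞 : Type u) [Category.{v} 𝒞] [HasZeroMorphisms 𝒞] : Prop :=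
  ∀ {X : 𝒞} (ρ : Rel 𝒞 X X), ρ.IsReflexive →
    (∃ l : X ⟶ ρ.R, l ≫ ρ.p1 = 𝟙 X ∧ l ≫ ρ.p2 = 0) →
    (∃ r : X ⟶ ρ.R, r ≫ ρ.p1 = 0 ∧ r ≫ ρ.p2 = 𝟙 X)

end Pointed

section Helpers

/-- Regular epimorphisms are epimorphisms. -/
theorem IsRegEpi.cancel {X Y : 𝒞} {f : X ⟶ Y} (h : IsRegEpi f)
    {T : 𝒞} {g h' : Y ⟶ T} (w : f ≫ g = f ≫ h') : g = h' := by
  obtain ⟨Z, a, b, hab, huniv⟩ := h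
  have h1 : a ≫ f ≫ g = b ≫ f ≫ g := by
    rw [← Category.assoc, ← Category.assoc, hab]
  obtain ⟨u, -, huniq⟩ := huniv (f ≫ g) h1
  exact (huniq g rfl).trans (huniq h' w.symm).symm

theorem isRegEpi_comp_iso {X Y Z : 𝒞} {e : X ⟶ Y} (he : IsRegEpi e) (i : Y ≅ Z) :
    IsRegEpi (e ≫ i.hom) := by
  obtain ⟨W, a, b, hab, huniv⟩ := he
  refine ⟨W, a, b, by rw [← Category.assoc, ← Category.assoc, hab], ?_⟩
  intro T h hh
  obtain ⟨u, hu, huniq⟩ := huniv h hh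
  refine ⟨i.inv ≫ u, by simp only [Category.assoc, Iso.hom_inv_id_assoc]; exact hu, ?_⟩
  intro v hv
  have h2 : e ≫ (i.hom ≫ v) = h := by simpa only [Category.assoc] using hv
  have h3 := huniq (i.hom ≫ v) h2
  rw [← h3, Iso.inv_hom_id_assoc]

theorem isRegEpi_iso_comp {X Y Z : 𝒞} {e : Y ⟶ Z} (he : IsRegEpi e) (i : X ≅ Y) :
    IsRegEpi (i.hom ≫ e) := by
  obtain ⟨W, a, b, hab, huniv⟩ := he
  refine ⟨W, a ≫ i.inv, b ≫ i.inv, ?_, ?_⟩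
  · simp only [Category.assoc, i.inv_hom_id_assoc]; exact hab
  · intro T h hh
    have hh' : a ≫ (i.inv ≫ h) = b ≫ (i.inv ≫ h) := by
      simpa only [Category.assoc] using hh
    obtain ⟨u, hu, huniq⟩ := huniv (i.inv ≫ h) hh'
    refine ⟨u, by simp only [Category.assoc, hu, Iso.hom_inv_id_assoc], ?_⟩
    intro v hv
    have hv' : (i.hom ≫ e) ≫ v = h := hv
    refine huniq v ?_
    rw [← hv']
    simp only [Category.assoc, Iso.inv_hom_id_assoc]

/-- The N-kernel of an identity is a monomorphism. -/
theorem nker_mono {N : MorphismProperty 𝒞} (hN : IsIdeal N) {K X : 𝒞} {n : K ⟶ X}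
    (hn : IsNKernel N (𝟙 X) n) : ∀ {T : 𝒞} (a b : T ⟶ K), a ≫ n = b ≫ n → a = b := by
  intro T a b hab
  have hNn : N n := by simpa using hn.1
  have h1 : N ((a ≫ n) ≫ 𝟙 X) := hN _ _ (Or.inl (hN a n (Or.inr hNn)))
  obtain ⟨u, -, huniq⟩ := hn.2 (a ≫ n) h1
  exact (huniq a rfl).trans (huniq b hab.symm).symm

/-- Regular image factorisation: the monic part. If `q` is a coequaliser of the kernel
pair of `g` and `q ≫ m = g`, then `m` is a monomorphism. -/
theorem image_mono [HasFiniteLimits 𝒞] (hstab : RegEpisStable 𝒞)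
    {P K Q : 𝒞} (g : P ⟶ K) (q : P ⟶ Q) (m : Q ⟶ K)
    (hcoeq : IsCoeqOf q (pullback.fst g g) (pullback.snd g g))
    (hqm : q ≫ m = g) :
    ∀ {T : 𝒞} (a b : T ⟶ Q), a ≫ m = b ≫ m → a = b := by
  have hq : IsRegEpi q :=
    ⟨pullback g g, pullback.fst g g, pullback.snd g g, hcoeq.1, fun h => hcoeq.2 h⟩
  set k1 := pullback.fst g g with hk1
  set k2 := pullback.snd g g with hk2
  set l1 := pullback.fst m m with hl1
  set l2 := pullback.snd m m with hl2
  -- M = pullback of m and g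
  set a1 := pullback.fst m g with ha1
  set a2 := pullback.snd m g with ha2
  have hMcond : a1 ≫ m = a2 ≫ g := pullback.condition
  -- p₁ : M → L
  have hp1cond : a1 ≫ m = (a2 ≫ q) ≫ m := by rw [Category.assoc, hqm]; exact hMcond
  set p₁ : pullback m g ⟶ pullback m m := pullback.lift a1 (a2 ≫ q) hp1cond with hp₁
  have hp₁l1 : p₁ ≫ l1 = a1 := pullback.lift_fst _ _ _
  have hp₁l2 : p₁ ≫ l2 = a2 ≫ q := pullback.lift_snd _ _ _
  -- square (p₁, a2, l2, q) is a pullback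
  have hPB1 : IsPullback p₁ a2 l2 q := by
    apply IsPullback.of_isLimit' ⟨hp₁l2⟩
    apply PullbackCone.IsLimit.mk hp₁l2
      (fun s => pullback.lift (s.fst ≫ l1) s.snd
        (by rw [Category.assoc, pullback.condition, ← Category.assoc, s.condition,
            Category.assoc, hqm]))
    · intro s
      apply pullback.hom_ext
      · rw [Category.assoc, hp₁l1, pullback.lift_fst]
      · rw [Category.assoc, hp₁l2, ← Category.assoc, pullback.lift_snd, s.condition]
    · intro s; exact pullback.lift_snd _ _ _
    · intro s w hw1 hw2
      apply pullback.hom_ext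
      · rw [pullback.lift_fst, ← hw1, Category.assoc, hp₁l1]
      · rw [pullback.lift_snd, ← hw2]
  have hregp₁ : IsRegEpi p₁ := hstab _ _ _ _ hPB1 hq
  -- φ : R → M
  have hφcond : (k1 ≫ q) ≫ m = k2 ≫ g := by
    rw [Category.assoc, hqm]; exact pullback.condition
  set φ : pullback g g ⟶ pullback m g := pullback.lift (k1 ≫ q) k2 hφcond with hφ
  have hφa1 : φ ≫ a1 = k1 ≫ q := pullback.lift_fst _ _ _
  have hφa2 : φ ≫ a2 = k2 := pullback.lift_snd _ _ _
  have hPB2 : IsPullback φ k1 a1 q := by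
    apply IsPullback.of_isLimit' ⟨hφa1⟩
    apply PullbackCone.IsLimit.mk hφa1
      (fun s => pullback.lift s.snd (s.fst ≫ a2)
        (by calc s.snd ≫ g = (s.snd ≫ q) ≫ m := by rw [Category.assoc, hqm]
              _ = (s.fst ≫ a1) ≫ m := by rw [← s.condition]
              _ = s.fst ≫ a2 ≫ g := by rw [Category.assoc, hMcond]
              _ = (s.fst ≫ a2) ≫ g := by rw [Category.assoc]))
    · intro s
      apply pullback.hom_ext
      · rw [Category.assoc, hφa1, ← Category.assoc, pullback.lift_fst, s.condition]
      · rw [Category.assoc, hφa2, pullback.lift_snd]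
    · intro s; exact pullback.lift_fst _ _ _
    · intro s w hw1 hw2
      apply pullback.hom_ext
      · rw [pullback.lift_fst, ← hw2]
      · rw [pullback.lift_snd, ← hw1, Category.assoc, hφa2]
  have hregφ : IsRegEpi φ := hstab _ _ _ _ hPB2 hq
  -- l1 = l2
  have hll : l1 = l2 := by
    have h1 : (φ ≫ p₁) ≫ l1 = (φ ≫ p₁) ≫ l2 := by
      rw [Category.assoc, Category.assoc, hp₁l1, hp₁l2, hφa1, ← Category.assoc, hφa2]
      exact hcoeq.1
    have h2 : p₁ ≫ l1 = p₁ ≫ l2 := hregφ.cancel (by simpa only [Category.assoc] using h1)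
    exact hregp₁.cancel h2
  intro T a b hab
  have : pullback.lift a b hab ≫ l1 = pullback.lift a b hab ≫ l2 := by rw [hll]
  rw [pullback.lift_fst, pullback.lift_snd] at this
  exact this

end Helpers

/-- In a regular multi-pointed category with kernels, a morphism
`f : X → Y` is saturating iff `Δ_Y* = f* f°` as composites of relations. -/
theorem statement6 [HasFiniteLimits 𝒞]
    (hcoeq : KernelPairsHaveCoequalisers 𝒞) (hstab : RegEpisStable 𝒞)
    (N : MorphismProperty 𝒞) (hN : IsIdeal N) (hker : HasNKernels N)
    {X Y : 𝒞} (f : X ⟶ Y) :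
    Saturating N f ↔
      ∀ (dY : Rel 𝒞 Y Y) (fs : Rel 𝒞 X Y) (τ : Rel 𝒞 Y Y),
        IsLargestStarSub N (diagRel Y) dY → IsLargestStarSub N (homRel f) fs →
        IsRelComp fs (Rel.op (homRel f)) τ → dY.equiv τ := by
  constructor
  · -- Saturating → relation equality
    intro hsat dY fs τ hdY hfs hτ
    obtain ⟨KX, nX, hnX⟩ := hker (𝟙 X)
    obtain ⟨KY, nY, hnY⟩ := hker (𝟙 Y)
    have monoX : ∀ {T : 𝒞} (a b : T ⟶ KX), a ≫ nX = b ≫ nX → a = b := nker_mono hN hnX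
    have monoY : ∀ {T : 𝒞} (a b : T ⟶ KY), a ≫ nY = b ≫ nY → a = b := nker_mono hN hnY
    have hNnX : N nX := by simpa using hnX.1
    have hNnY : N nY := by simpa using hnY.1
    -- the comparison morphism u
    obtain ⟨u, hu, -⟩ := hnY.2 (nX ≫ f) (hN _ _ (Or.inl (hN nX f (Or.inl hNnX))))
    have hru : IsRegEpi u := hsat nX nY hnX hnY u hu
    -- facts about dY
    obtain ⟨⟨jd, hjd1, hjd2⟩, hNd, hdmax⟩ := hdY
    have hjd1' : jd = dY.p1 := (Category.comp_id jd).symm.trans hjd1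
    have hjd2' : jd = dY.p2 := (Category.comp_id jd).symm.trans hjd2
    have hd12 : dY.p1 = dY.p2 := hjd1'.symm.trans hjd2'
    obtain ⟨y, hy, -⟩ := hnY.2 dY.p1 (hN _ _ (Or.inl hNd))
    -- z : KY → dY.R
    obtain ⟨z, hz1, hz2⟩ := hdmax ⟨KY, nY, nY, fun a b h _ => monoY a b h⟩
      ⟨nY, Category.comp_id nY, Category.comp_id nY⟩ hNnY
    -- facts about fs
    obtain ⟨⟨jf, hjf1, hjf2⟩, hNfs, hfmax⟩ := hfs
    have hjf1' : jf = fs.p1 := (Category.comp_id jf).symm.trans hjf1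
    have hjf2' : fs.p1 ≫ f = fs.p2 := by rw [← hjf1']; exact hjf2
    obtain ⟨w, hw, -⟩ := hnX.2 fs.p1 (hN _ _ (Or.inl hNfs))
    obtain ⟨mm, hm1, hm2⟩ := hfmax ⟨KX, nX, nX ≫ f, fun a b h _ => monoX a b h⟩
      ⟨nX, Category.comp_id nX, rfl⟩ hNnX
    -- the composite relation τ
    obtain ⟨e, he, he1, he2⟩ := hτ
    have he1' : e ≫ τ.p1 = pullback.fst (𝟙 X) fs.p1 ≫ f := he1
    have he2' : e ≫ τ.p2 = pullback.snd (𝟙 X) fs.p1 ≫ fs.p2 := he2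
    have hcond : pullback.fst (𝟙 X) fs.p1 = pullback.snd (𝟙 X) fs.p1 ≫ fs.p1 := by
      have := pullback.condition (f := 𝟙 X) (g := fs.p1)
      rwa [Category.comp_id] at this
    have hτ12 : τ.p1 = τ.p2 := by
      apply he.cancel
      rw [he1', he2', hcond, Category.assoc, hjf2']
    constructor
    · -- dY.le τ  (uses u regular epi)
      have hψc : nX ≫ 𝟙 X = mm ≫ fs.p1 := by rw [Category.comp_id, hm1]
      set ψ : KX ⟶ pullback (𝟙 X) fs.p1 := pullback.lift nX mm hψc with hψ
      have hψe1 : (ψ ≫ e) ≫ τ.p1 = u ≫ nY := by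
        exact (Category.assoc _ _ _).trans ((congrArg (ψ ≫ ·) he1').trans (by rw [← Category.assoc, hψ, pullback.lift_fst, hu]))
      have hψe2 : (ψ ≫ e) ≫ τ.p2 = u ≫ nY := by
        exact (Category.assoc _ _ _).trans ((congrArg (ψ ≫ ·) he2').trans (by rw [← Category.assoc, hψ, pullback.lift_snd, hm2, hu]))
      obtain ⟨Z2, a2, b2, hab2, hcoequ⟩ := id hru
      have hab' : a2 ≫ ψ ≫ e = b2 ≫ ψ ≫ e := by
        apply τ.jm
        · rw [Category.assoc, hψe1, Category.assoc, hψe1,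
            ← Category.assoc, ← Category.assoc, hab2]
        · rw [Category.assoc, hψe2, Category.assoc, hψe2,
            ← Category.assoc, ← Category.assoc, hab2]
      obtain ⟨w', hw', -⟩ := hcoequ (ψ ≫ e) hab'
      have hwτ1 : w' ≫ τ.p1 = nY := by
        apply hru.cancel
        rw [← Category.assoc, hw', hψe1]
      have hwτ2 : w' ≫ τ.p2 = nY := by rw [← hτ12]; exact hwτ1
      exact ⟨y ≫ w', by rw [Category.assoc, hwτ1, hy],
        by rw [Category.assoc, hwτ2, hy, hd12]⟩
    · -- τ.le dY
      obtain ⟨Z, a, b, hab, hcoeqe⟩ := id he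
      set q' : pullback (𝟙 X) fs.p1 ⟶ KY := pullback.snd (𝟙 X) fs.p1 ≫ w ≫ u with hq'
      have hq'nY : q' ≫ nY = e ≫ τ.p1 := by
        rw [he1', hcond, hq']
        simp only [Category.assoc]
        rw [hu, ← Category.assoc w, hw]
      have habq' : a ≫ q' = b ≫ q' := by
        apply monoY
        exact (Category.assoc _ _ _).trans ((congrArg (a ≫ ·) hq'nY).trans
          (((Category.assoc _ _ _).symm.trans ((congrArg (· ≫ τ.p1) hab).trans (Category.assoc _ _ _))).trans
            ((congrArg (b ≫ ·) hq'nY).symm.trans (Category.assoc _ _ _).symm)))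
      obtain ⟨v, hv, -⟩ := hcoeqe q' habq'
      have hvnY : v ≫ nY = τ.p1 := by
        apply he.cancel
        rw [← Category.assoc, hv]; exact hq'nY
      exact ⟨v ≫ z, by rw [Category.assoc, hz1, hvnY],
        by rw [Category.assoc, hz2, hvnY, hτ12]⟩
  · -- relation equality → Saturating
    intro hrel KX KY nX nY hnX hnY u hu
    have monoX : ∀ {T : 𝒞} (a b : T ⟶ KX), a ≫ nX = b ≫ nX → a = b := nker_mono hN hnX
    have monoY : ∀ {T : 𝒞} (a b : T ⟶ KY), a ≫ nY = b ≫ nY → a = b := nker_mono hN hnY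
    have hNnX : N nX := by simpa using hnX.1
    have hNnY : N nY := by simpa using hnY.1
    -- concrete largest star subrelations
    set dY : Rel 𝒞 Y Y := ⟨KY, nY, nY, fun a b h _ => monoY a b h⟩ with hdYdef
    set fsR : Rel 𝒞 X Y := ⟨KX, nX, nX ≫ f, fun a b h _ => monoX a b h⟩ with hfsdef
    have hdY : IsLargestStarSub N (diagRel Y) dY := by
      refine ⟨⟨nY, Category.comp_id nY, Category.comp_id nY⟩, hNnY, ?_⟩
      intro σ ⟨j, hj1, hj2⟩ hNσ
      have hj1' : j = σ.p1 := (Category.comp_id j).symm.trans hj1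
      have hj2' : j = σ.p2 := (Category.comp_id j).symm.trans hj2
      obtain ⟨v, hv, -⟩ := hnY.2 σ.p1 (hN _ _ (Or.inl hNσ))
      exact ⟨v, hv, by rw [show (dY.p2 : KY ⟶ Y) = nY from rfl, hv, ← hj1', hj2']⟩
    have hfs : IsLargestStarSub N (homRel f) fsR := by
      refine ⟨⟨nX, Category.comp_id nX, rfl⟩, hNnX, ?_⟩
      intro σ ⟨j, hj1, hj2⟩ hNσ
      have hj1' : j = σ.p1 := (Category.comp_id j).symm.trans hj1
      have hj2' : σ.p1 ≫ f = σ.p2 := by rw [← hj1']; exact hj2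
      obtain ⟨v, hv, -⟩ := hnX.2 σ.p1 (hN _ _ (Or.inl hNσ))
      exact ⟨v, hv, by rw [show (fsR.p2 : KX ⟶ Y) = nX ≫ f from rfl, ← Category.assoc,
        hv, hj2']⟩
    -- construct the composite τ via the image factorisation of g' = snd ≫ u
    set pf := pullback.fst (𝟙 X) nX with hpf
    set ps := pullback.snd (𝟙 X) nX with hps
    have hcond : pf = ps ≫ nX := by
      have := pullback.condition (f := 𝟙 X) (g := nX)
      rwa [Category.comp_id] at this
    set g' : pullback (𝟙 X) nX ⟶ KY := ps ≫ u with hg'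
    obtain ⟨Q, q, hqcomm, hquniv⟩ := hcoeq g' (pullback.fst g' g') (pullback.snd g' g')
      (IsPullback.of_hasPullback g' g')
    obtain ⟨m, hqm, -⟩ := hquniv g' pullback.condition
    have hq : IsRegEpi q := ⟨pullback g' g', pullback.fst g' g', pullback.snd g' g',
      hqcomm, fun h hh => hquniv h hh⟩
    have hmono : ∀ {T : 𝒞} (a b : T ⟶ Q), a ≫ m = b ≫ m → a = b := image_mono hstab g' q m ⟨hqcomm, fun h hh => hquniv h hh⟩ hqm
    set τ : Rel 𝒞 Y Y := ⟨Q, m ≫ nY, m ≫ nY, fun a b h _ => by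
      apply hmono
      apply monoY
      simpa only [Category.assoc] using h⟩ with hτdef
    have hτ : IsRelComp fsR (Rel.op (homRel f)) τ := by
      refine ⟨q, hq, ?_, ?_⟩
      · show q ≫ m ≫ nY = pf ≫ f
        rw [← Category.assoc, hqm, hg', Category.assoc, hu, hcond, Category.assoc]
      · show q ≫ m ≫ nY = ps ≫ (nX ≫ f)
        rw [← Category.assoc, hqm, hg', Category.assoc, hu]
    obtain ⟨⟨α, hα1, hα2⟩, ⟨β, hβ1, hβ2⟩⟩ := hrel dY fsR τ hdY hfs hτ
    -- α : KY ⟶ Q with α ≫ m ≫ nY = nY ; hence m is an iso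
    have hα1' : α ≫ m ≫ nY = nY := hα1
    have hαm : α ≫ m = 𝟙 KY := by
      apply monoY
      rw [Category.assoc, hα1', Category.id_comp]
    have hmα : m ≫ α = 𝟙 Q := by
      apply hmono
      rw [Category.assoc, hαm, Category.comp_id, Category.id_comp]
    -- ps is an iso
    have hσc : nX ≫ 𝟙 X = 𝟙 KX ≫ nX := by rw [Category.comp_id, Category.id_comp]
    set σi : KX ⟶ pullback (𝟙 X) nX := pullback.lift nX (𝟙 KX) hσc with hσi
    have hσps : σi ≫ ps = 𝟙 KX := pullback.lift_snd _ _ _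
    have hpsσ : ps ≫ σi = 𝟙 (pullback (𝟙 X) nX) := by
      apply pullback.hom_ext
      · rw [Category.assoc, hσi, pullback.lift_fst, Category.id_comp, ← hcond]
      · rw [Category.assoc, hσps, Category.comp_id, Category.id_comp]
    have key : IsRegEpi (σi ≫ q ≫ m) := by
      have h1 : IsRegEpi (q ≫ m) :=
        isRegEpi_comp_iso hq ⟨m, α, hmα, hαm⟩
      exact isRegEpi_iso_comp h1 ⟨σi, ps, by rw [hσps], by rw [hpsσ]⟩
    have : σi ≫ q ≫ m = u := by
      rw [hqm, hg', ← Category.assoc, hσps, Category.id_comp]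
    rwa [this] at key


end Paper
end

section
/- Let C be a regular multi-pointed category with kernels in which every regular epimorphism is saturating. Then C is 2-star-permutable if and only if the following holds: for every commutative cube in which the front face is a square of type (1), w: W → Y is a regular epimorphism, δ: W → D and β: Y → B are morphisms with β·w = d·δ, and the back face consists of the stars of the pullback relations (W×_D C)* of (g, δ) and (Y×_B A)* of (f, β) together with the comparison morphism λ: (W×_D C)* → (Y×_B A)* induced by w and c, the morphism λ is a regular epimorphism. -/
open CategoryTheory CategoryTheory.Limits

universe v u

namespace Paper

variable {𝒞 : Type u} [Category.{v} 𝒞]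

variable {X Y Z : 𝒞}

section Machinery

theorem isRegEpi_cancel {X Y : 𝒞} {f : X ⟶ Y} (h : IsRegEpi f) :
    ∀ {T : 𝒞} {u v : Y ⟶ T}, f ≫ u = f ≫ v → u = v := by
  obtain ⟨Z, a, b, hab, huniv⟩ := h
  intro T u v huv
  obtain ⟨w, _, hwu⟩ := huniv (f ≫ u)
    (by rw [← Category.assoc, ← Category.assoc, hab])
  exact (hwu u rfl).trans (hwu v huv.symm).symm

theorem isRegEpi_of_isIso {X Y : 𝒞} (f : X ⟶ Y) [IsIso f] : IsRegEpi f :=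
  ⟨X, 𝟙 X, 𝟙 X, rfl, fun h _ =>
    ⟨inv f ≫ h, by simp, fun y hy => by rw [← hy]; simp⟩⟩

theorem isRegEpi_of_split {X Y : 𝒞} {g : X ⟶ Y} {t : Y ⟶ X} (ht : t ≫ g = 𝟙 Y) :
    IsRegEpi g := by
  refine ⟨X, g ≫ t, 𝟙 X, by rw [Category.assoc, ht, Category.comp_id, Category.id_comp],
    fun h hh => ⟨t ≫ h, ?_, fun y hy => ?_⟩⟩
  · show g ≫ t ≫ h = h
    rw [← Category.assoc]
    simpa using hh
  · show y = t ≫ h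
    have hy' : g ≫ y = h := hy
    rw [← hy', ← Category.assoc, ht, Category.id_comp]

theorem cover_lift [HasFiniteLimits 𝒞] (hstab : RegEpisStable 𝒞) {P Q Z : 𝒞} {q : P ⟶ Q}
    (hq : IsRegEpi q) (u : Z ⟶ Q) :
    ∃ (Z' : 𝒞) (r : Z' ⟶ Z) (l : Z' ⟶ P), IsRegEpi r ∧ l ≫ q = r ≫ u :=
  ⟨pullback u q, pullback.fst u q, pullback.snd u q,
    hstab _ _ _ _ (IsPullback.of_hasPullback u q) hq, pullback.condition.symm⟩

theorem isRegEpi_comp [HasFiniteLimits 𝒞] (hstab : RegEpisStable 𝒞) {X Y Z : 𝒞}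
    {f : X ⟶ Y} {g : Y ⟶ Z} (hf : IsRegEpi f) (hg : IsRegEpi g) : IsRegEpi (f ≫ g) := by
  have hfe := @isRegEpi_cancel _ _ _ _ _ hf
  have hge := @isRegEpi_cancel _ _ _ _ _ hg
  obtain ⟨Zf, a₁, b₁, hab₁, hu₁⟩ := id hf
  obtain ⟨Zg, a₂, b₂, hab₂, hu₂⟩ := id hg
  obtain ⟨Z₁, r₁, l₁, hr₁, hl₁⟩ := cover_lift hstab hf a₂
  obtain ⟨Z₂, r₂, l₂, hr₂, hl₂⟩ := cover_lift hstab hf (r₁ ≫ b₂)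
  refine ⟨pullback (f ≫ g) (f ≫ g), pullback.fst _ _, pullback.snd _ _,
    pullback.condition, fun {T} h hh => ?_⟩
  have mem : ∀ {W : 𝒞} (p q : W ⟶ X), p ≫ f ≫ g = q ≫ f ≫ g → p ≫ h = q ≫ h := by
    intro W p q hpq
    have hc : p ≫ (f ≫ g) = q ≫ (f ≫ g) := by simpa [Category.assoc] using hpq
    have h1 := pullback.lift_fst p q hc
    have h2 := pullback.lift_snd p q hc
    calc p ≫ h = pullback.lift p q hc ≫ pullback.fst (f ≫ g) (f ≫ g) ≫ h := by
          rw [← Category.assoc, h1]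
      _ = pullback.lift p q hc ≫ pullback.snd (f ≫ g) (f ≫ g) ≫ h := by rw [hh]
      _ = q ≫ h := by rw [← Category.assoc, h2]
  have h₁ : a₁ ≫ h = b₁ ≫ h :=
    mem a₁ b₁ (by rw [← Category.assoc, ← Category.assoc, hab₁])
  obtain ⟨h', hh', hh'u⟩ := hu₁ h h₁
  have hh'' : f ≫ h' = h := hh'
  have key : r₂ ≫ l₁ ≫ h = l₂ ≫ h := by
    have := mem (r₂ ≫ l₁) l₂ (by
      simp only [Category.assoc, reassoc_of% hl₁, reassoc_of% hl₂]
      simp [hab₂])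
    simpa [Category.assoc] using this
  have key2 : a₂ ≫ h' = b₂ ≫ h' := by
    apply isRegEpi_cancel hr₁
    apply isRegEpi_cancel hr₂
    simp only [← reassoc_of% hl₁, ← reassoc_of% hl₂, hh'', key]
  obtain ⟨u, hu, huu⟩ := hu₂ h' key2
  have hu' : g ≫ u = h' := hu
  refine ⟨u, ?_, fun y hy => ?_⟩
  · show (f ≫ g) ≫ u = h
    rw [Category.assoc, hu', hh'']
  · have hy' : (f ≫ g) ≫ y = h := hy
    apply hge
    apply hfe
    rw [← Category.assoc, hy', hu', hh'']

theorem image_factor [HasFiniteLimits 𝒞] (hcoeq : KernelPairsHaveCoequalisers 𝒞)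
    (hstab : RegEpisStable 𝒞) {T S : 𝒞} (h : T ⟶ S) :
    ∃ (Q : 𝒞) (q : T ⟶ Q) (m : Q ⟶ S), IsRegEpi q ∧ q ≫ m = h ∧
      ∀ {Z : 𝒞} (u v : Z ⟶ Q), u ≫ m = v ≫ m → u = v := by
  obtain ⟨Q, q, hq, huniv⟩ := hcoeq h (pullback.fst h h) (pullback.snd h h)
    (IsPullback.of_hasPullback h h)
  have hqre : IsRegEpi q := ⟨_, _, _, hq, fun h' hh' => huniv h' hh'⟩
  obtain ⟨m, hm, _⟩ := huniv h pullback.condition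
  have hm' : q ≫ m = h := hm
  refine ⟨Q, q, m, hqre, hm', fun {Z} u v huv => ?_⟩
  obtain ⟨Z₁, r₁, l₁, hr₁, hl₁⟩ := cover_lift hstab hqre u
  obtain ⟨Z₂, r₂, l₂, hr₂, hl₂⟩ := cover_lift hstab hqre (r₁ ≫ v)
  have hcond : (r₂ ≫ l₁) ≫ h = l₂ ≫ h := by
    rw [← hm']
    simp only [Category.assoc, reassoc_of% hl₁, reassoc_of% hl₂]
    simp [huv]
  have h1 := pullback.lift_fst (r₂ ≫ l₁) l₂ hcond
  have h2 := pullback.lift_snd (r₂ ≫ l₁) l₂ hcond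
  apply isRegEpi_cancel hr₁
  apply isRegEpi_cancel hr₂
  have : (r₂ ≫ l₁) ≫ q = l₂ ≫ q := by
    calc (r₂ ≫ l₁) ≫ q
        = pullback.lift (r₂ ≫ l₁) l₂ hcond ≫ pullback.fst h h ≫ q := by
          rw [← Category.assoc, h1]
      _ = pullback.lift (r₂ ≫ l₁) l₂ hcond ≫ pullback.snd h h ≫ q := by rw [hq]
      _ = l₂ ≫ q := by rw [← Category.assoc, h2]
  calc r₂ ≫ r₁ ≫ u = (r₂ ≫ l₁) ≫ q := by rw [Category.assoc, hl₁]
    _ = l₂ ≫ q := this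
    _ = r₂ ≫ r₁ ≫ v := by rw [hl₂]

theorem isRegEpi_of_comp_left [HasFiniteLimits 𝒞] (hcoeq : KernelPairsHaveCoequalisers 𝒞)
    (hstab : RegEpisStable 𝒞) {S X Y : 𝒞} {u : S ⟶ X} {f : X ⟶ Y}
    (h : IsRegEpi (u ≫ f)) : IsRegEpi f := by
  obtain ⟨Q, q, m, hqre, hqm, hmono⟩ := image_factor hcoeq hstab f
  obtain ⟨Z, a, b, hab, huniv⟩ := id h
  -- u ≫ q coequalises (a, b)
  have hco : a ≫ u ≫ q = b ≫ u ≫ q := by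
    apply hmono
    simp only [Category.assoc, hqm]
    rw [← Category.assoc, ← Category.assoc] at hab ⊢
    exact hab
  obtain ⟨v, hv, _⟩ := huniv (u ≫ q) hco
  have hv' : (u ≫ f) ≫ v = u ≫ q := hv
  have hepi := @isRegEpi_cancel _ _ _ _ _ h
  have hvm : v ≫ m = 𝟙 Y := by
    apply hepi
    rw [← Category.assoc, hv', Category.comp_id, Category.assoc, hqm]
  have hmv : m ≫ v = 𝟙 Q := by
    apply hmono
    rw [Category.assoc, hvm, Category.comp_id, Category.id_comp]
  -- f = q ≫ m with m iso, q regular epi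
  obtain ⟨Z', a', b', hab', huniv'⟩ := id hqre
  refine ⟨Z', a', b', ?_, fun {T} k hk => ?_⟩
  · rw [← hqm, ← Category.assoc, ← Category.assoc, hab']
  · obtain ⟨w, hw, hwu⟩ := huniv' k hk
    have hw' : q ≫ w = k := hw
    refine ⟨v ≫ w, ?_, fun y hy => ?_⟩
    · show f ≫ v ≫ w = k
      rw [← hqm, Category.assoc, ← Category.assoc m v w, hmv, Category.id_comp, hw']
    · have hy' : f ≫ y = k := hy
      have : q ≫ m ≫ y = k := by rw [← Category.assoc, hqm, hy']
      have := hwu (m ≫ y) this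
      rw [← this, ← Category.assoc, hvm, Category.id_comp]

end Machinery

section Machinery2

theorem nker_cancel {N : MorphismProperty 𝒞} (hN : IsIdeal N) {X K : 𝒞} {n : K ⟶ X}
    (hn : IsNKernel N (𝟙 X) n) {Z : 𝒞} {u v : Z ⟶ K} (huv : u ≫ n = v ≫ n) : u = v := by
  have hNn : N n := by simpa using hn.1
  have hm : N ((u ≫ n) ≫ 𝟙 X) := by
    rw [Category.comp_id]
    exact hN u n (Or.inr hNn)
  obtain ⟨w, _, hwu⟩ := hn.2 (u ≫ n) hm
  exact (hwu u rfl).trans (hwu v huv.symm).symm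

theorem nker_fac {N : MorphismProperty 𝒞} {X K : 𝒞} {n : K ⟶ X}
    (hn : IsNKernel N (𝟙 X) n) {Z : 𝒞} (m : Z ⟶ X) (hm : N m) :
    ∃ v : Z ⟶ K, v ≫ n = m := by
  obtain ⟨v, hv, _⟩ := hn.2 m (by simpa using hm)
  exact ⟨v, hv⟩

theorem span_factor [HasFiniteLimits 𝒞] (hcoeq : KernelPairsHaveCoequalisers 𝒞)
    (hstab : RegEpisStable 𝒞) {T X Y : 𝒞} (p : T ⟶ X) (q : T ⟶ Y) :
    ∃ (τ : Rel 𝒞 X Y) (e : T ⟶ τ.R), IsRegEpi e ∧ e ≫ τ.p1 = p ∧ e ≫ τ.p2 = q := by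
  obtain ⟨Q, e, m, he, hem, hmono⟩ := image_factor hcoeq hstab (prod.lift p q)
  refine ⟨⟨Q, m ≫ Limits.prod.fst, m ≫ Limits.prod.snd, fun {Z} a b h1 h2 => ?_⟩, e, he, ?_, ?_⟩
  · apply hmono
    apply Limits.prod.hom_ext
    · simpa [Category.assoc] using h1
    · simpa [Category.assoc] using h2
  · rw [← Category.assoc, hem]; exact Limits.prod.lift_fst p q
  · rw [← Category.assoc, hem]; exact Limits.prod.lift_snd p q

theorem relComp_exists [HasFiniteLimits 𝒞] (hcoeq : KernelPairsHaveCoequalisers 𝒞)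
    (hstab : RegEpisStable 𝒞) {X Y Z : 𝒞} (σ : Rel 𝒞 Y Z) (ρ : Rel 𝒞 X Y) :
    ∃ τ : Rel 𝒞 X Z, IsRelComp σ ρ τ := by
  obtain ⟨τ, e, he, h1, h2⟩ := span_factor hcoeq hstab
    (pullback.fst ρ.p2 σ.p1 ≫ ρ.p1) (pullback.snd ρ.p2 σ.p1 ≫ σ.p2)
  exact ⟨τ, e, he, h1, h2⟩

theorem largestStarSub_exists [HasFiniteLimits 𝒞] {N : MorphismProperty 𝒞}
    (hN : IsIdeal N) (hker : HasNKernels N) {X Y : 𝒞} (ρ : Rel 𝒞 X Y) :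
    ∃ τ : Rel 𝒞 X Y, IsLargestStarSub N ρ τ := by
  obtain ⟨K, n, hn⟩ := hker (𝟙 X)
  have hNn : N n := by simpa using hn.1
  refine ⟨⟨pullback n ρ.p1, pullback.fst n ρ.p1 ≫ n, pullback.snd n ρ.p1 ≫ ρ.p2,
    fun {Z} a b h1 h2 => ?_⟩, ⟨pullback.snd n ρ.p1, pullback.condition.symm, rfl⟩,
    hN _ n (Or.inr hNn), fun σ hle hNσ => ?_⟩
  · have hfst : a ≫ pullback.fst n ρ.p1 = b ≫ pullback.fst n ρ.p1 :=
      nker_cancel hN hn (by simpa [Category.assoc] using h1)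
    have hsnd : a ≫ pullback.snd n ρ.p1 = b ≫ pullback.snd n ρ.p1 := by
      apply ρ.jm
      · have := pullback.condition (f := n) (g := ρ.p1)
        rw [Category.assoc, Category.assoc, ← this, ← Category.assoc, ← Category.assoc, hfst]
      · simpa [Category.assoc] using h2
    apply pullback.hom_ext hfst hsnd
  · obtain ⟨j, hj1, hj2⟩ := hle
    obtain ⟨v, hv⟩ := nker_fac hn σ.p1 hNσ
    have hcomp : v ≫ n = j ≫ ρ.p1 := by rw [hv, hj1]
    refine ⟨pullback.lift v j hcomp, ?_, ?_⟩
    · rw [← Category.assoc, pullback.lift_fst, hv]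
    · rw [← Category.assoc, pullback.lift_snd, hj2]

theorem star_fac [HasFiniteLimits 𝒞] {N : MorphismProperty 𝒞}
    (hN : IsIdeal N) (hker : HasNKernels N) {X Y : 𝒞} {ρ τ : Rel 𝒞 X Y}
    (hτ : IsLargestStarSub N ρ τ) {Z : 𝒞} (r : Z ⟶ ρ.R) (h1 : N (r ≫ ρ.p1)) :
    ∃ z : Z ⟶ τ.R, z ≫ τ.p1 = r ≫ ρ.p1 ∧ z ≫ τ.p2 = r ≫ ρ.p2 := by
  obtain ⟨K, n, hn⟩ := hker (𝟙 X)
  obtain ⟨v, hv⟩ := nker_fac hn (r ≫ ρ.p1) h1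
  -- the concrete largest star subrelation through this kernel
  have hNn : N n := by simpa using hn.1
  -- build the concrete star subrelation σ₀ and use largestness of τ
  obtain ⟨σ₀, hσ₀⟩ : ∃ σ₀ : Rel 𝒞 X Y, (σ₀.le ρ ∧ N σ₀.p1) ∧
      ∃ z : Z ⟶ σ₀.R, z ≫ σ₀.p1 = r ≫ ρ.p1 ∧ z ≫ σ₀.p2 = r ≫ ρ.p2 := by
    refine ⟨⟨pullback n ρ.p1, pullback.fst n ρ.p1 ≫ n, pullback.snd n ρ.p1 ≫ ρ.p2,
      fun {W} a b h1' h2' => ?_⟩, ⟨⟨pullback.snd n ρ.p1, pullback.condition.symm, rfl⟩,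
      hN _ n (Or.inr hNn)⟩, pullback.lift v r hv, ?_, ?_⟩
    · have hfst : a ≫ pullback.fst n ρ.p1 = b ≫ pullback.fst n ρ.p1 :=
        nker_cancel hN hn (by simpa [Category.assoc] using h1')
      have hsnd : a ≫ pullback.snd n ρ.p1 = b ≫ pullback.snd n ρ.p1 := by
        apply ρ.jm
        · have := pullback.condition (f := n) (g := ρ.p1)
          rw [Category.assoc, Category.assoc, ← this, ← Category.assoc, ← Category.assoc, hfst]
        · simpa [Category.assoc] using h2'
      apply pullback.hom_ext hfst hsnd
    · rw [← Category.assoc, pullback.lift_fst, hv]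
    · rw [← Category.assoc, pullback.lift_snd]
  obtain ⟨⟨hle, hNσ₀⟩, z, hz1, hz2⟩ := hσ₀
  obtain ⟨j, hj1, hj2⟩ := hτ.2.2 σ₀ hle hNσ₀
  exact ⟨z ≫ j, by rw [Category.assoc, hj1, hz1], by rw [Category.assoc, hj2, hz2]⟩

theorem starPullbackRel_exists [HasFiniteLimits 𝒞] {N : MorphismProperty 𝒞}
    (hN : IsIdeal N) (hker : HasNKernels N) {W E D : 𝒞} (δ : W ⟶ D) (g : E ⟶ D) :
    ∃ (P : 𝒞) (ν1 : P ⟶ W) (ν2 : P ⟶ E), IsStarPullbackRel N δ g ν1 ν2 := by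
  obtain ⟨K, n, hn⟩ := hker (𝟙 W)
  have hNn : N n := by simpa using hn.1
  refine ⟨pullback (n ≫ δ) g, pullback.fst (n ≫ δ) g ≫ n, pullback.snd (n ≫ δ) g,
    hN _ n (Or.inr hNn), ?_, fun {T} t1 t2 hn1 hcomm => ?_⟩
  · rw [Category.assoc, ← pullback.condition, ← Category.assoc]
  · obtain ⟨v, hv⟩ := nker_fac hn t1 hn1
    have hcomp : v ≫ n ≫ δ = t2 ≫ g := by rw [← Category.assoc, hv, hcomm]
    refine ⟨pullback.lift v t2 hcomp, ⟨?_, pullback.lift_snd _ _ _⟩, fun y hy => ?_⟩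
    · rw [← Category.assoc, pullback.lift_fst, hv]
    · apply pullback.hom_ext
      · apply nker_cancel hN hn
        rw [pullback.lift_fst]
        have := hy.1
        rw [← Category.assoc] at this
        rw [this, hv]
      · rw [pullback.lift_snd]; exact hy.2
  
end Machinery2

section Forward

theorem kerPairRel_p1' [HasPullbacks 𝒞] {X Y : 𝒞} (f : X ⟶ Y) :
    (kerPairRel f).p1 = pullback.fst f f := rfl

theorem kerPairRel_p2' [HasPullbacks 𝒞] {X Y : 𝒞} (f : X ⟶ Y) :
    (kerPairRel f).p2 = pullback.snd f f := rfl

theorem forward_cube [HasFiniteLimits 𝒞]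
    (hcoeq : KernelPairsHaveCoequalisers 𝒞) (hstab : RegEpisStable 𝒞)
    {N : MorphismProperty 𝒞} (hN : IsIdeal N) (hker : HasNKernels N)
    (hsat : ∀ {X Y : 𝒞} (f : X ⟶ Y), IsRegEpi f → Saturating N f)
    (hperm : TwoStarPermutable 𝒞 N)
    {A B E D W Y : 𝒞} (f : A ⟶ B) (s : B ⟶ A) (g : E ⟶ D) (t : D ⟶ E)
    (c : E ⟶ A) (d : D ⟶ B) (hsq : IsSquare1 f s g t c d)
    (w : W ⟶ Y) (δ : W ⟶ D) (β : Y ⟶ B) (hw : IsRegEpi w) (hwβ : w ≫ β = δ ≫ d)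
    {V U : 𝒞} (ν1 : V ⟶ W) (ν2 : V ⟶ E) (χ1 : U ⟶ Y) (χ2 : U ⟶ A)
    (hν : IsStarPullbackRel N δ g ν1 ν2) (hχ : IsStarPullbackRel N β f χ1 χ2)
    (lam : V ⟶ U) (hl1 : lam ≫ χ1 = ν1 ≫ w) (hl2 : lam ≫ χ2 = ν2 ≫ c) :
    IsRegEpi lam := by
  obtain ⟨KW, nW, hnW⟩ := hker (𝟙 W)
  obtain ⟨KY, nY, hnY⟩ := hker (𝟙 Y)
  have hNnW : N nW := by simpa using hnW.1
  obtain ⟨wb, hwb⟩ := nker_fac hnY (nW ≫ w) (hN nW w (Or.inl hNnW))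
  have hwbre : IsRegEpi wb := hsat w hw nW nY hnW hnY wb hwb
  obtain ⟨kU, hkU⟩ := nker_fac hnY χ1 hχ.1
  obtain ⟨Z₁, ρ₁, κ, hρ₁, hκ⟩ := cover_lift hstab hwbre kU
  set x : Z₁ ⟶ D := κ ≫ nW ≫ δ with hxdef
  set a : Z₁ ⟶ A := ρ₁ ≫ χ2 with hadef
  have hxd : x ≫ d = a ≫ f := by
    simp only [hxdef, hadef, Category.assoc, ← hwβ, ← reassoc_of% hwb,
      reassoc_of% hκ, reassoc_of% hkU, hχ.2.1]
  have hNx : N x := hN κ (nW ≫ δ) (Or.inr (hN nW δ (Or.inl hNnW)))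
  have hNxt : N (x ≫ t) := hN x t (Or.inl hNx)
  obtain ⟨Z₂, ρ₂, e1, hρ₂, he1⟩ := cover_lift hstab hsq.regepi_c a
  set e2 : Z₂ ⟶ E := e1 ≫ g ≫ t with he2def
  have he2g : e2 ≫ g = e1 ≫ g := by
    simp only [he2def, Category.assoc, hsq.sec_g, Category.comp_id]
  have he2c : e2 ≫ c = ρ₂ ≫ (x ≫ t) ≫ c := by
    simp only [he2def, Category.assoc, ← hsq.comm2, ← reassoc_of% hsq.comm1,
      reassoc_of% he1, ← reassoc_of% hxd]
  -- relations on E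
  have hgre : IsRegEpi g := isRegEpi_of_split hsq.sec_g
  obtain ⟨sc, hsc⟩ := largestStarSub_exists hN hker (kerPairRel c)
  obtain ⟨sgE, hsgE⟩ := largestStarSub_exists hN hker (kerPairRel g)
  obtain ⟨τ₁, hτ₁⟩ := relComp_exists hcoeq hstab (kerPairRel c) sgE
  obtain ⟨τ₂, hτ₂⟩ := relComp_exists hcoeq hstab (kerPairRel g) sc
  have heqv := hperm c g hsq.regepi_c hgre sc sgE hsc hsgE τ₁ τ₂ hτ₁ hτ₂
  -- build the element of τ₂ over Z₂
  have hcond1 : (ρ₂ ≫ x ≫ t) ≫ c = e2 ≫ c := by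
    rw [he2c]; simp [Category.assoc]
  set rc : Z₂ ⟶ (kerPairRel c).R := pullback.lift (ρ₂ ≫ x ≫ t) e2 hcond1 with hrcdef
  have hrc1 : rc ≫ (kerPairRel c).p1 = ρ₂ ≫ x ≫ t := by
    rw [hrcdef]; exact pullback.lift_fst _ _ _
  have hrc2 : rc ≫ (kerPairRel c).p2 = e2 := by
    rw [hrcdef]; exact pullback.lift_snd _ _ _
  have hNrc : N (rc ≫ (kerPairRel c).p1) := by
    rw [hrc1]; exact hN ρ₂ (x ≫ t) (Or.inr hNxt)
  obtain ⟨z, hz1, hz2⟩ := star_fac hN hker hsc rc hNrc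
  rw [hrc1] at hz1; rw [hrc2] at hz2
  set kg : Z₂ ⟶ (kerPairRel g).R := pullback.lift e2 e1 he2g with hkgdef
  have hkg1 : kg ≫ (kerPairRel g).p1 = e2 := by
    rw [hkgdef]; exact pullback.lift_fst _ _ _
  have hkg2 : kg ≫ (kerPairRel g).p2 = e1 := by
    rw [hkgdef]; exact pullback.lift_snd _ _ _
  obtain ⟨e₂', hre2, hcp1, hcp2⟩ := hτ₂
  set pz : Z₂ ⟶ pullback sc.p2 (kerPairRel g).p1 :=
    pullback.lift z kg (by rw [hz2, hkg1]) with hpzdef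
  set ζ : Z₂ ⟶ τ₂.R := pz ≫ e₂' with hζdef
  have hζ1 : ζ ≫ τ₂.p1 = ρ₂ ≫ x ≫ t := by
    rw [hζdef, hpzdef, Category.assoc, hcp1, ← Category.assoc, pullback.lift_fst, hz1]
  have hζ2 : ζ ≫ τ₂.p2 = e1 := by
    rw [hζdef, hpzdef, Category.assoc, hcp2, ← Category.assoc, pullback.lift_snd, hkg2]
  -- transfer along 2-star-permutability
  obtain ⟨j, hjp1, hjp2⟩ := heqv.2
  set ζ' : Z₂ ⟶ τ₁.R := ζ ≫ j with hζ'def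
  obtain ⟨e₁', hre1, hd1, hd2⟩ := hτ₁
  obtain ⟨Z₃, ρ₃, ξ, hρ₃, hξ⟩ := cover_lift hstab hre1 ζ'
  set msg : Z₃ ⟶ sgE.R := ξ ≫ pullback.fst sgE.p2 (kerPairRel c).p1 with hmsgdef
  set mE : Z₃ ⟶ (kerPairRel c).R := ξ ≫ pullback.snd sgE.p2 (kerPairRel c).p1 with hmEdef
  set e' : Z₃ ⟶ E := msg ≫ sgE.p2 with he'def
  have hmsg1 : msg ≫ sgE.p1 = ρ₃ ≫ ρ₂ ≫ x ≫ t := by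
    rw [hmsgdef, Category.assoc, ← hd1, ← Category.assoc, hξ, Category.assoc,
      hζ'def, Category.assoc, hjp1, hζ1]
  have hmE2 : mE ≫ (kerPairRel c).p2 = ρ₃ ≫ e1 := by
    rw [hmEdef, Category.assoc, ← hd2, ← Category.assoc, hξ, Category.assoc,
      hζ'def, Category.assoc, hjp2, hζ2]
  have he'alt : e' = mE ≫ (kerPairRel c).p1 := by
    rw [he'def, hmsgdef, hmEdef, Category.assoc, Category.assoc, pullback.condition]
  have he'c : e' ≫ c = ρ₃ ≫ ρ₂ ≫ a := by
    rw [he'alt, Category.assoc, show (kerPairRel c).p1 ≫ c = (kerPairRel c).p2 ≫ c from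
      pullback.condition, ← Category.assoc, hmE2, Category.assoc, he1]
  obtain ⟨jg, hjg1, hjg2⟩ := hsgE.1
  have he'g : e' ≫ g = ρ₃ ≫ ρ₂ ≫ x := by
    have h1 : sgE.p2 ≫ g = sgE.p1 ≫ g := by
      rw [← hjg1, ← hjg2, Category.assoc, Category.assoc]
      congr 1; exact pullback.condition.symm
    rw [he'def, Category.assoc, h1, ← Category.assoc, hmsg1]
    simp only [Category.assoc, hsq.sec_g, Category.comp_id]
  -- construct the element of V
  have hNt1 : N (ρ₃ ≫ ρ₂ ≫ κ ≫ nW) :=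
    hN ρ₃ _ (Or.inr (hN ρ₂ _ (Or.inr (hN κ nW (Or.inr hNnW)))))
  have hcompat : (ρ₃ ≫ ρ₂ ≫ κ ≫ nW) ≫ δ = e' ≫ g := by
    rw [he'g, hxdef]; simp only [Category.assoc]
  obtain ⟨σ, ⟨hσ1, hσ2⟩, _⟩ := hν.2.2 (ρ₃ ≫ ρ₂ ≫ κ ≫ nW) e' hNt1 hcompat
  set ρ : Z₃ ⟶ U := ρ₃ ≫ ρ₂ ≫ ρ₁ with hρdef
  have hρre : IsRegEpi ρ := by
    rw [hρdef]; exact isRegEpi_comp hstab hρ₃ (isRegEpi_comp hstab hρ₂ hρ₁)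
  -- σ ≫ lam = ρ by uniqueness
  obtain ⟨u0, _, huniq⟩ := hχ.2.2 (ρ ≫ χ1) (ρ ≫ χ2) (hN ρ χ1 (Or.inr hχ.1))
    (by simp only [Category.assoc, hχ.2.1])
  have hfin1 : (σ ≫ lam) ≫ χ1 = ρ ≫ χ1 := by
    rw [Category.assoc, hl1, ← Category.assoc, hσ1, hρdef]
    simp only [Category.assoc, ← hwb, reassoc_of% hκ, reassoc_of% hkU, hkU]
  have hfin2 : (σ ≫ lam) ≫ χ2 = ρ ≫ χ2 := by
    rw [Category.assoc, hl2, ← Category.assoc, hσ2, he'c, hadef, hρdef]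
    simp only [Category.assoc]
  have hfinal : σ ≫ lam = ρ :=
    (huniq (σ ≫ lam) ⟨hfin1, hfin2⟩).trans (huniq ρ ⟨rfl, rfl⟩).symm
  exact isRegEpi_of_comp_left hcoeq hstab (hfinal ▸ hρre)

end Forward

section Backward

theorem backward_le [HasFiniteLimits 𝒞]
    (hcoeq : KernelPairsHaveCoequalisers 𝒞) (hstab : RegEpisStable 𝒞)
    {N : MorphismProperty 𝒞} (hN : IsIdeal N) (hker : HasNKernels N)
    (hcube : ∀ {A B E D W Y : 𝒞} (f : A ⟶ B) (s : B ⟶ A) (g : E ⟶ D) (t : D ⟶ E)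
        (c : E ⟶ A) (d : D ⟶ B), IsSquare1 f s g t c d →
        ∀ (w : W ⟶ Y) (δ : W ⟶ D) (β : Y ⟶ B), IsRegEpi w → w ≫ β = δ ≫ d →
        ∀ {V U : 𝒞} (ν1 : V ⟶ W) (ν2 : V ⟶ E) (χ1 : U ⟶ Y) (χ2 : U ⟶ A),
          IsStarPullbackRel N δ g ν1 ν2 → IsStarPullbackRel N β f χ1 χ2 →
        ∀ (lam : V ⟶ U), lam ≫ χ1 = ν1 ≫ w → lam ≫ χ2 = ν2 ≫ c → IsRegEpi lam)
    {X Y Z : 𝒞} (f : X ⟶ Y) (g : X ⟶ Z) (hf : IsRegEpi f) (hg : IsRegEpi g)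
    (sf sg : Rel 𝒞 X X) (hsf : IsLargestStarSub N (kerPairRel f) sf)
    (hsg : IsLargestStarSub N (kerPairRel g) sg)
    (τ₁ τ₂ : Rel 𝒞 X X) (hτ₁ : IsRelComp (kerPairRel f) sg τ₁)
    (hτ₂ : IsRelComp (kerPairRel g) sf τ₂) : τ₁.le τ₂ := by
  -- image relation S = (g × g)(Eq f) on Z
  obtain ⟨S, eS, heS, hS1, hS2⟩ := span_factor hcoeq hstab
    (pullback.fst f f ≫ g) (pullback.snd f f ≫ g)
  set Δ : X ⟶ pullback f f := pullback.lift (𝟙 X) (𝟙 X) rfl with hΔdef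
  have hΔfst : Δ ≫ pullback.fst f f = 𝟙 X := by rw [hΔdef]; exact pullback.lift_fst _ _ _
  have hΔsnd : Δ ≫ pullback.snd f f = 𝟙 X := by rw [hΔdef]; exact pullback.lift_snd _ _ _
  have hΔ1 : Δ ≫ eS ≫ S.p1 = g := by
    rw [hS1, ← Category.assoc, hΔfst, Category.id_comp]
  have hΔ2 : Δ ≫ eS ≫ S.p2 = g := by
    rw [hS2, ← Category.assoc, hΔsnd, Category.id_comp]
  -- the section s₁ of S.p1, descended along g
  obtain ⟨Zg, ag, bg, habg, hguniv⟩ := id hg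
  have hdesc : ag ≫ Δ ≫ eS = bg ≫ Δ ≫ eS := by
    apply S.jm
    · simp only [Category.assoc, hΔ1, habg]
    · simp only [Category.assoc, hΔ2, habg]
  obtain ⟨s₁, hs₁, _⟩ := hguniv (Δ ≫ eS) hdesc
  have hs₁' : g ≫ s₁ = Δ ≫ eS := hs₁
  have hs₁p1 : s₁ ≫ S.p1 = 𝟙 Z := by
    apply isRegEpi_cancel hg
    rw [← Category.assoc, hs₁', Category.assoc, hΔ1, Category.comp_id]
  have hsq : IsSquare1 S.p1 s₁ (pullback.fst f f) Δ eS g :=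
    ⟨hs₁p1, hΔfst, heS, hg, hS1, hs₁'⟩
  -- the star pullback relations of the cube (with w = 𝟙 X, δ = 𝟙 X, β = g)
  obtain ⟨V, ν1, ν2, hν⟩ := starPullbackRel_exists hN hker (𝟙 X) (pullback.fst f f)
  obtain ⟨U, χ1, χ2, hχ⟩ := starPullbackRel_exists hN hker g S.p1
  have hν1' : ν1 = ν2 ≫ pullback.fst f f := by
    have := hν.2.1; rwa [Category.comp_id] at this
  obtain ⟨lam, ⟨hla1, hla2⟩, _⟩ := hχ.2.2 (ν1 ≫ 𝟙 X) (ν2 ≫ eS)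
    (hN ν1 (𝟙 X) (Or.inl hν.1))
    (by rw [Category.comp_id, hν1', Category.assoc, Category.assoc, hS1, ← Category.assoc])
  have hlam : IsRegEpi lam :=
    hcube S.p1 s₁ (pullback.fst f f) Δ eS g hsq (𝟙 X) (𝟙 X) g
      (isRegEpi_of_isIso _) (by simp)
      ν1 ν2 χ1 χ2 hν hχ lam hla1 hla2
  have hla1' : lam ≫ χ1 = ν1 := by rw [hla1, Category.comp_id]
  -- the generic element of τ₁
  obtain ⟨e₁, hre₁, hd1, hd2⟩ := hτ₁
  set x : pullback sg.p2 (kerPairRel f).p1 ⟶ X :=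
    pullback.fst sg.p2 (kerPairRel f).p1 ≫ sg.p1 with hxdef
  set y : pullback sg.p2 (kerPairRel f).p1 ⟶ X :=
    pullback.fst sg.p2 (kerPairRel f).p1 ≫ sg.p2 with hydef
  set z : pullback sg.p2 (kerPairRel f).p1 ⟶ X :=
    pullback.snd sg.p2 (kerPairRel f).p1 ≫ (kerPairRel f).p2 with hzdef
  have hNx : N x := hN _ sg.p1 (Or.inr hsg.2.1)
  obtain ⟨jG, hjG1, hjG2⟩ := hsg.1
  have hp12 : sg.p1 ≫ g = sg.p2 ≫ g := by
    rw [← hjG1, ← hjG2, Category.assoc, Category.assoc]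
    congr 1; exact pullback.condition
  have hgxy : x ≫ g = y ≫ g := by
    rw [hxdef, hydef, Category.assoc, Category.assoc, hp12]
  have hyalt : y = pullback.snd sg.p2 (kerPairRel f).p1 ≫ (kerPairRel f).p1 := by
    rw [hydef, pullback.condition]
  have hfyz : y ≫ f = z ≫ f := by
    rw [hyalt, hzdef, Category.assoc, Category.assoc]
    congr 1; exact pullback.condition
  set ky : pullback sg.p2 (kerPairRel f).p1 ⟶ pullback f f :=
    pullback.lift y z hfyz with hkydef
  have hky1 : ky ≫ pullback.fst f f = y := by rw [hkydef]; exact pullback.lift_fst _ _ _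
  have hky2 : ky ≫ pullback.snd f f = z := by rw [hkydef]; exact pullback.lift_snd _ _ _
  obtain ⟨θ, ⟨hθ1, hθ2⟩, _⟩ := hχ.2.2 x (ky ≫ eS) hNx
    (by
      calc x ≫ g = y ≫ g := hgxy
        _ = (ky ≫ pullback.fst f f) ≫ g := by rw [hky1]
        _ = ky ≫ pullback.fst f f ≫ g := Category.assoc _ _ _
        _ = ky ≫ eS ≫ S.p1 := by rw [hS1]
        _ = (ky ≫ eS) ≫ S.p1 := (Category.assoc _ _ _).symm)
  -- lift the generic element along lam, after a cover
  obtain ⟨PB', rr, ξ, hrr, hξ⟩ := cover_lift hstab hlam θ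
  set e : PB' ⟶ pullback f f := ξ ≫ ν2 with hedef
  have hefst : e ≫ pullback.fst f f = rr ≫ x := by
    rw [hedef, Category.assoc, ← hν1', ← hla1', ← Category.assoc, hξ, Category.assoc, hθ1]
  set u : PB' ⟶ X := e ≫ pullback.snd f f with hudef
  have huf : u ≫ f = (rr ≫ x) ≫ f := by
    rw [hudef, Category.assoc, ← pullback.condition, ← Category.assoc, hefst]
  have heeS : e ≫ eS = rr ≫ ky ≫ eS := by
    rw [hedef, Category.assoc, ← hla2, ← Category.assoc, hξ, Category.assoc, hθ2]
  have hug : u ≫ g = (rr ≫ z) ≫ g := by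
    calc u ≫ g = (e ≫ pullback.snd f f) ≫ g := by rw [hudef]
      _ = e ≫ pullback.snd f f ≫ g := Category.assoc _ _ _
      _ = e ≫ eS ≫ S.p2 := by rw [hS2]
      _ = (e ≫ eS) ≫ S.p2 := (Category.assoc _ _ _).symm
      _ = (rr ≫ ky ≫ eS) ≫ S.p2 := by rw [heeS]
      _ = rr ≫ (ky ≫ eS) ≫ S.p2 := Category.assoc _ _ _
      _ = rr ≫ ky ≫ eS ≫ S.p2 := by rw [Category.assoc ky eS S.p2]
      _ = rr ≫ ky ≫ pullback.snd f f ≫ g := by rw [hS2]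
      _ = rr ≫ (ky ≫ pullback.snd f f) ≫ g := by rw [← Category.assoc ky (pullback.snd f f) g]
      _ = rr ≫ z ≫ g := by rw [hky2]
      _ = (rr ≫ z) ≫ g := (Category.assoc _ _ _).symm
  -- build the element of τ₂
  obtain ⟨e₂, hre₂, hc1, hc2⟩ := hτ₂
  set kf : PB' ⟶ (kerPairRel f).R := pullback.lift (rr ≫ x) u huf.symm with hkfdef
  have hkf1 : kf ≫ (kerPairRel f).p1 = rr ≫ x := by rw [hkfdef]; exact pullback.lift_fst _ _ _
  have hkf2 : kf ≫ (kerPairRel f).p2 = u := by rw [hkfdef]; exact pullback.lift_snd _ _ _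
  have hNkf : N (kf ≫ (kerPairRel f).p1) := by rw [hkf1]; exact hN rr x (Or.inr hNx)
  obtain ⟨zf, hzf1, hzf2⟩ := star_fac hN hker hsf kf hNkf
  rw [hkf1] at hzf1; rw [hkf2] at hzf2
  set kgz : PB' ⟶ (kerPairRel g).R :=
    pullback.lift u (rr ≫ z) (by rw [hug]) with hkgzdef
  have hkgz1 : kgz ≫ (kerPairRel g).p1 = u := by rw [hkgzdef]; exact pullback.lift_fst _ _ _
  have hkgz2 : kgz ≫ (kerPairRel g).p2 = rr ≫ z := by
    rw [hkgzdef]; exact pullback.lift_snd _ _ _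
  set pz : PB' ⟶ pullback sf.p2 (kerPairRel g).p1 :=
    pullback.lift zf kgz (by rw [hzf2, hkgz1]) with hpzdef
  set k' : PB' ⟶ τ₂.R := pz ≫ e₂ with hk'def
  have hk'1 : k' ≫ τ₂.p1 = rr ≫ x := by
    rw [hk'def, Category.assoc, hc1, hpzdef, ← Category.assoc, pullback.lift_fst, hzf1]
  have hk'2 : k' ≫ τ₂.p2 = rr ≫ z := by
    rw [hk'def, Category.assoc, hc2, hpzdef, ← Category.assoc, pullback.lift_snd, hkgz2]
  -- descend along the cover to get τ₁ ≤ τ₂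
  set q : PB' ⟶ τ₁.R := rr ≫ e₁ with hqdef
  have hqre : IsRegEpi q := by rw [hqdef]; exact isRegEpi_comp hstab hrr hre₁
  have hq1 : q ≫ τ₁.p1 = rr ≫ x := by rw [hqdef, Category.assoc, hd1, hxdef]
  have hq2 : q ≫ τ₁.p2 = rr ≫ z := by rw [hqdef, Category.assoc, hd2, hzdef]
  obtain ⟨Zq, aq, bq, habq, hquniv⟩ := id hqre
  have habk : aq ≫ k' = bq ≫ k' := by
    apply τ₂.jm
    · calc (aq ≫ k') ≫ τ₂.p1 = aq ≫ k' ≫ τ₂.p1 := Category.assoc _ _ _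
        _ = aq ≫ rr ≫ x := by rw [hk'1]
        _ = aq ≫ q ≫ τ₁.p1 := by rw [hq1]
        _ = (aq ≫ q) ≫ τ₁.p1 := (Category.assoc _ _ _).symm
        _ = (bq ≫ q) ≫ τ₁.p1 := by rw [habq]
        _ = bq ≫ q ≫ τ₁.p1 := Category.assoc _ _ _
        _ = bq ≫ rr ≫ x := by rw [hq1]
        _ = bq ≫ k' ≫ τ₂.p1 := by rw [hk'1]
        _ = (bq ≫ k') ≫ τ₂.p1 := (Category.assoc _ _ _).symm
    · calc (aq ≫ k') ≫ τ₂.p2 = aq ≫ k' ≫ τ₂.p2 := Category.assoc _ _ _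
        _ = aq ≫ rr ≫ z := by rw [hk'2]
        _ = aq ≫ q ≫ τ₁.p2 := by rw [hq2]
        _ = (aq ≫ q) ≫ τ₁.p2 := (Category.assoc _ _ _).symm
        _ = (bq ≫ q) ≫ τ₁.p2 := by rw [habq]
        _ = bq ≫ q ≫ τ₁.p2 := Category.assoc _ _ _
        _ = bq ≫ rr ≫ z := by rw [hq2]
        _ = bq ≫ k' ≫ τ₂.p2 := by rw [hk'2]
        _ = (bq ≫ k') ≫ τ₂.p2 := (Category.assoc _ _ _).symm
  obtain ⟨jmap, hjm, _⟩ := hquniv k' habk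
  have hjm' : q ≫ jmap = k' := hjm
  refine ⟨jmap, ?_, ?_⟩
  · apply isRegEpi_cancel hqre
    rw [← Category.assoc, hjm', hk'1, hq1]
  · apply isRegEpi_cancel hqre
    rw [← Category.assoc, hjm', hk'2, hq2]

end Backward

/-- Let `𝒞` be a regular multi-pointed category with kernels
whose regular epimorphisms are saturating. Then `𝒞` is 2-star-permutable iff for
every commutative cube whose front face is a square of type (1), with `w` a regular
epimorphism, `β·w = d·δ`, and whose back face consists of the stars of the pullback
relations of `(g, δ)` and `(f, β)` together with the comparison morphism `λ`
induced by `w` and `c`, the morphism `λ` is a regular epimorphism. -/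
theorem statement7 [HasFiniteLimits 𝒞]
    (hcoeq : KernelPairsHaveCoequalisers 𝒞) (hstab : RegEpisStable 𝒞)
    (N : MorphismProperty 𝒞) (hN : IsIdeal N) (hker : HasNKernels N)
    (hsat : ∀ {X Y : 𝒞} (f : X ⟶ Y), IsRegEpi f → Saturating N f) :
    TwoStarPermutable 𝒞 N ↔
      ∀ {A B E D W Y : 𝒞} (f : A ⟶ B) (s : B ⟶ A) (g : E ⟶ D) (t : D ⟶ E)
        (c : E ⟶ A) (d : D ⟶ B), IsSquare1 f s g t c d →
        ∀ (w : W ⟶ Y) (δ : W ⟶ D) (β : Y ⟶ B), IsRegEpi w → w ≫ β = δ ≫ d →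
        ∀ {V U : 𝒞} (ν1 : V ⟶ W) (ν2 : V ⟶ E) (χ1 : U ⟶ Y) (χ2 : U ⟶ A),
          IsStarPullbackRel N δ g ν1 ν2 → IsStarPullbackRel N β f χ1 χ2 →
        ∀ (lam : V ⟶ U), lam ≫ χ1 = ν1 ≫ w → lam ≫ χ2 = ν2 ≫ c →
          IsRegEpi lam := by
  constructor
  · intro hperm A B E D W Y f s g t c d hsq w δ β hw hwβ V U ν1 ν2 χ1 χ2 hν hχ lam hl1 hl2
    exact forward_cube hcoeq hstab hN hker hsat hperm f s g t c d hsq w δ β hw hwβ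
      ν1 ν2 χ1 χ2 hν hχ lam hl1 hl2
  · intro hcube X Y Z f g hf hg sf sg hsf hsg τ₁ τ₂ hτ₁ hτ₂
    exact ⟨backward_le hcoeq hstab hN hker hcube f g hf hg sf sg hsf hsg τ₁ τ₂ hτ₁ hτ₂,
      backward_le hcoeq hstab hN hker hcube g f hg hf sg sf hsg hsf τ₂ τ₁ hτ₂ hτ₁⟩

end Paper
end

section
/- Let C be a regular multi-pointed category with kernels. Then C has enough trivial objects if and only if for every relation (σ1, σ2): S ⇉ X on an object X and every morphism n with codomain S, whenever σ1·n ∈ N and σ2·n ∈ N one has n ∈ N. -/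
open CategoryTheory CategoryTheory.Limits

universe v u

namespace Paper

variable {𝒞 : Type u} [Category.{v} 𝒞]

variable {X Y Z : 𝒞}

/-- A regular multi-pointed category with kernels has enough
trivial objects iff for every relation `(σ1, σ2) : S ⇉ X` and every morphism `n`
into `S`, `σ1·n ∈ N` and `σ2·n ∈ N` imply `n ∈ N`. -/
theorem statement9 [HasFiniteLimits 𝒞]
    (hcoeq : KernelPairsHaveCoequalisers 𝒞) (hstab : RegEpisStable 𝒞)
    (N : MorphismProperty 𝒞) (hN : IsIdeal N) (hker : HasNKernels N) :
    EnoughTrivialObjects N ↔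
      ∀ {X Z : 𝒞} (σ : Rel 𝒞 X X) (n : Z ⟶ σ.R),
        N (n ≫ σ.p1) → N (n ≫ σ.p2) → N n := by
  -- N-kernels are monomorphisms
  have kerMono : ∀ {K X Y : 𝒞} (f : X ⟶ Y) (k : K ⟶ X), IsNKernel N f k → Mono k := by
    intro K X Y f k hk
    have hkN : N (k ≫ f) := hk.1
    constructor
    intro W a b hab
    have hm : N ((a ≫ k) ≫ f) := by
      rw [Category.assoc]; exact hN a (k ≫ f) (Or.inr hkN)
    obtain ⟨u, hu, huniq⟩ := hk.2 (a ≫ k) hm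
    have ha := huniq a rfl
    have hb := huniq b hab.symm
    rw [ha, hb]
  constructor
  · -- enough trivial objects ⇒ condition
    intro E X Z σ n h1 h2
    obtain ⟨K, k, hk⟩ := hker (𝟙 X)
    have hkN : N k := by simpa using hk.1
    have hkmono : Mono k := kerMono _ _ hk
    -- K is N-trivial
    obtain ⟨T, p, q, hT, hpq⟩ := E.1 k hkN
    have hqN : N q := by
      have := hN (𝟙 T) q (Or.inl hT); simpa using this
    obtain ⟨v, hv, _⟩ := hk.2 q (by simpa using hqN)
    have hpv : p ≫ v = 𝟙 K := by
      rw [← cancel_mono k]; rw [Category.assoc, hv, hpq, Category.id_comp]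
    have hpmono : Mono p := by
      constructor
      intro W g h w
      have : g ≫ p ≫ v = h ≫ p ≫ v := by
        rw [← Category.assoc, w, Category.assoc]
      simpa [hpv] using this
    have hKtriv : NTrivial N K := E.2.1 p hpmono hT
    have hKKtriv : NTrivial N (K ⨯ K) := E.2.2 K hKtriv
    -- factor the two legs through K
    obtain ⟨u1, hu1, _⟩ := hk.2 (n ≫ σ.p1) (by simpa using h1)
    obtain ⟨u2, hu2, _⟩ := hk.2 (n ≫ σ.p2) (by simpa using h2)
    -- pull back the relation along k × k
    let m : σ.R ⟶ X ⨯ X := prod.lift σ.p1 σ.p2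
    have hmmono : Mono m := by
      constructor
      intro W g h w
      apply σ.jm
      · have := congrArg (· ≫ prod.fst) w
        simp only [m] at this
        rwa [Category.assoc, Category.assoc, prod.lift_fst] at this
      · have := congrArg (· ≫ prod.snd) w
        simp only [m] at this
        rwa [Category.assoc, Category.assoc, prod.lift_snd] at this
    let kk : K ⨯ K ⟶ X ⨯ X := prod.map k k
    haveI := hmmono
    haveI : Mono (pullback.snd m kk) := inferInstance
    have hPtriv : NTrivial N (pullback m kk) := E.2.1 (pullback.snd m kk) this hKKtriv
    have hw : n ≫ m = prod.lift u1 u2 ≫ kk := by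
      apply Limits.prod.hom_ext <;> simp [m, kk, hu1, hu2]
    have hz : pullback.lift n (prod.lift u1 u2) hw ≫ pullback.fst m kk = n :=
      pullback.lift_fst _ _ _
    rw [← hz]
    refine hN _ _ (Or.inr ?_)
    have := hN (𝟙 (pullback m kk)) (pullback.fst m kk) (Or.inl hPtriv)
    simpa using this
  · -- condition ⇒ enough trivial objects
    intro h
    have triv_of_mono : ∀ {S X : 𝒞} (mm : S ⟶ X), Mono mm → N mm → NTrivial N S := by
      intro S X mm hmono hmN
      let σ : Rel 𝒞 X X := ⟨S, mm, mm, fun a b w _ => by rwa [cancel_mono] at w⟩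
      have := h σ (𝟙 S) (by simpa [σ] using hmN) (by simpa [σ] using hmN)
      exact this
    refine ⟨?_, ?_, ?_⟩
    · intro X Y f hf
      obtain ⟨K, k, hk⟩ := hker (𝟙 Y)
      have hkN : N k := by simpa using hk.1
      have hkmono : Mono k := kerMono _ _ hk
      have hKtriv : NTrivial N K := triv_of_mono k hkmono hkN
      obtain ⟨u, hu, _⟩ := hk.2 f (by simpa using hf)
      exact ⟨K, u, k, hKtriv, hu⟩
    · intro S X mm hmono hX
      exact triv_of_mono mm hmono (by
        have := hN mm (𝟙 X) (Or.inr hX); simpa using this)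
    · intro X hX
      let σ : Rel 𝒞 X X := ⟨X ⨯ X, prod.fst, prod.snd, fun a b w1 w2 => Limits.prod.hom_ext w1 w2⟩
      have hf : N (𝟙 (X ⨯ X) ≫ σ.p1) := by
        have := hN (prod.fst : X ⨯ X ⟶ X) (𝟙 X) (Or.inr hX)
        simpa [σ] using this
      have hs : N (𝟙 (X ⨯ X) ≫ σ.p2) := by
        have := hN (prod.snd : X ⨯ X ⟶ X) (𝟙 X) (Or.inr hX)
        simpa [σ] using this
      exact h σ (𝟙 (X ⨯ X)) hf hs

end Paper
end

section
/- Let C be a regular multi-pointed category with kernels and with enough trivial objects. Then the class of N-trivial objects of C is closed under binary products if and only if for every relation (σ1, σ2): S ↣ X×Y from an object X to an object Y and every morphism n with codomain S, whenever σ1·n ∈ N and σ2·n ∈ N one has n ∈ N. -/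
open CategoryTheory CategoryTheory.Limits

universe v u

namespace Paper

variable {𝒞 : Type u} [Category.{v} 𝒞]

variable {X Y Z : 𝒞}

/-- In a regular multi-pointed category with kernels and with
enough trivial objects, the `N`-trivial objects are closed under binary products
iff for every relation `(σ1, σ2) : S ↣ X × Y` and every morphism `n` into `S`,
`σ1·n ∈ N` and `σ2·n ∈ N` imply `n ∈ N`. -/
theorem statement10 [HasFiniteLimits 𝒞]
    (hcoeq : KernelPairsHaveCoequalisers 𝒞) (hstab : RegEpisStable 𝒞)
    (N : MorphismProperty 𝒞) (hN : IsIdeal N) (hker : HasNKernels N)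
    (htriv : EnoughTrivialObjects N) :
    (∀ X Y : 𝒞, NTrivial N X → NTrivial N Y → NTrivial N (X ⨯ Y)) ↔
      ∀ {X Y Z : 𝒞} (σ : Rel 𝒞 X Y) (n : Z ⟶ σ.R),
        N (n ≫ σ.p1) → N (n ≫ σ.p2) → N n := by
  constructor
  · intro hprod X Y Z σ n h1 h2
    obtain ⟨T1, a1, q1, ht1, hq1⟩ := htriv.1 _ h1
    obtain ⟨T2, a2, q2, ht2, hq2⟩ := htriv.1 _ h2
    have htt : NTrivial N (T1 ⨯ T2) := hprod _ _ ht1 ht2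
    have hm : Mono (prod.lift σ.p1 σ.p2) := by
      constructor
      intro W a b h
      exact σ.jm a b
        (by have := congrArg (· ≫ prod.fst) h; rwa [Category.assoc, Category.assoc, prod.lift_fst] at this)
        (by have := congrArg (· ≫ prod.snd) h; rwa [Category.assoc, Category.assoc, prod.lift_snd] at this)
    set m : σ.R ⟶ X ⨯ Y := prod.lift σ.p1 σ.p2
    set g : T1 ⨯ T2 ⟶ X ⨯ Y := prod.map q1 q2
    have hmono : Mono (pullback.snd m g) := pullback.snd_of_mono
    have hPtriv : NTrivial N (pullback m g) := htriv.2.1 _ hmono htt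
    have hcomm : n ≫ m = prod.lift a1 a2 ≫ g := by
      apply Limits.prod.hom_ext <;> simp [m, g, hq1, hq2]
    have hn : (pullback.lift n (prod.lift a1 a2) hcomm) ≫ pullback.fst m g = n :=
      pullback.lift_fst _ _ _
    rw [← hn]
    apply hN
    right
    have : pullback.fst m g = 𝟙 _ ≫ pullback.fst m g := by simp
    rw [this]
    exact hN _ _ (Or.inl hPtriv)
  · intro h X Y hX hY
    set σ : Rel 𝒞 X Y :=
      ⟨X ⨯ Y, prod.fst, prod.snd, fun a b h1 h2 => Limits.prod.hom_ext h1 h2⟩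
    have h1 : N ((𝟙 (X ⨯ Y)) ≫ σ.p1) := by
      have : (𝟙 (X ⨯ Y)) ≫ σ.p1 = (prod.fst : X ⨯ Y ⟶ X) ≫ 𝟙 X := by simp [σ]
      rw [this]; exact hN _ _ (Or.inr hX)
    have h2 : N ((𝟙 (X ⨯ Y)) ≫ σ.p2) := by
      have : (𝟙 (X ⨯ Y)) ≫ σ.p2 = (prod.snd : X ⨯ Y ⟶ Y) ≫ 𝟙 Y := by simp [σ]
      rw [this]; exact hN _ _ (Or.inr hY)
    exact h σ (𝟙 (X ⨯ Y)) h1 h2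

end Paper
end

section
/- Let C be a multi-pointed category with kernels and with enough trivial objects, in which N-trivial objects are closed under binary products. Consider a commutative cube in which c: C → A, d: D → B and w: W → Y are regular epimorphisms, g: C → D, f: A → B, δ: W → D and β: Y → B are morphisms with f·c = d·g and β·w = d·δ, and the back face consists of the stars of the pullback relations (W×_D C)* of (g, δ) and (Y×_B A)* of (f, β) together with the induced comparison morphism λ: (W×_D C)* → (Y×_B A)*. Let ḡ: Eq(c)* → Eq(d)* and δ̄: Eq(w)* → Eq(d)* be the morphisms induced between the star-kernels of c, of w and of d. Then the star-kernel Eq(λ)* of λ, together with its two induced morphisms to Eq(w)* and to Eq(c)*, is canonically isomorphic to the star of the pullback relation of (ḡ, δ̄), together with its two projections to Eq(w)* and Eq(c)*. -/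
open CategoryTheory CategoryTheory.Limits

universe v u

namespace Paper

variable {𝒞 : Type u} [Category.{v} 𝒞]

variable {X Y Z : 𝒞}

/-- A star kernel has jointly monomorphic legs. -/
lemma starKernel_jm {N : MorphismProperty 𝒞} (hN : IsIdeal N) {S X Y : 𝒞} {f : X ⟶ Y}
    {s1 s2 : S ⟶ X} (h : IsStarKernel N f s1 s2) :
    ∀ {T : 𝒞} (a b : T ⟶ S), a ≫ s1 = b ≫ s1 → a ≫ s2 = b ≫ s2 → a = b := by
  intro T a b h1 h2
  have hNa : N (a ≫ s1) := hN a s1 (Or.inr h.1)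
  have hw : (a ≫ s1) ≫ f = (a ≫ s2) ≫ f := by
    simp only [Category.assoc, h.2.1]
  obtain ⟨z, hz, hzu⟩ := h.2.2 (a ≫ s1) (a ≫ s2) hNa hw
  exact (hzu a ⟨rfl, rfl⟩).trans (hzu b ⟨h1.symm, h2.symm⟩).symm

/-- A star of a pullback relation has jointly monomorphic legs. -/
lemma starPB_jm {N : MorphismProperty 𝒞} (hN : IsIdeal N) {W E D P : 𝒞} {δ : W ⟶ D}
    {g : E ⟶ D} {ν1 : P ⟶ W} {ν2 : P ⟶ E} (h : IsStarPullbackRel N δ g ν1 ν2) :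
    ∀ {T : 𝒞} (a b : T ⟶ P), a ≫ ν1 = b ≫ ν1 → a ≫ ν2 = b ≫ ν2 → a = b := by
  intro T a b h1 h2
  have hNa : N (a ≫ ν1) := hN a ν1 (Or.inr h.1)
  have hw : (a ≫ ν1) ≫ δ = (a ≫ ν2) ≫ g := by
    simp only [Category.assoc, h.2.1]
  obtain ⟨z, hz, hzu⟩ := h.2.2 (a ≫ ν1) (a ≫ ν2) hNa hw
  exact (hzu a ⟨rfl, rfl⟩).trans (hzu b ⟨h1.symm, h2.symm⟩).symm

/-- Key lemma: a morphism into a "star-like" universal object whose two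
composites with the legs lie in `N` itself lies in `N`. -/
lemma nmem_of_legs [HasFiniteLimits 𝒞] (N : MorphismProperty 𝒞)
    (hN : IsIdeal N) (htriv : EnoughTrivialObjects N)
    (hprod : ∀ X Y : 𝒞, NTrivial N X → NTrivial N Y → NTrivial N (X ⨯ Y))
    {W E D Q : 𝒞} (dl : W ⟶ D) (g : E ⟶ D) (p : Q ⟶ W) (q : Q ⟶ E)
    (hpq : p ≫ dl = q ≫ g)
    (huniv : ∀ {T : 𝒞} (x1 : T ⟶ W) (x2 : T ⟶ E), N x1 → x1 ≫ dl = x2 ≫ g →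
      ∃ z : T ⟶ Q, z ≫ p = x1 ∧ z ≫ q = x2)
    (jm : ∀ {T : 𝒞} (a b : T ⟶ Q), a ≫ p = b ≫ p → a ≫ q = b ≫ q → a = b)
    {T : 𝒞} (m : T ⟶ Q) (h1 : N (m ≫ p)) (h2 : N (m ≫ q)) : N m := by
  obtain ⟨T1, a1, b1, ht1, hf1⟩ := htriv.1 _ h1
  obtain ⟨T2, a2, b2, ht2, hf2⟩ := htriv.1 _ h2
  -- the equaliser inside `T1 ⨯ T2`
  let P := equalizer ((prod.fst : T1 ⨯ T2 ⟶ T1) ≫ b1 ≫ dl)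
      ((prod.snd : T1 ⨯ T2 ⟶ T2) ≫ b2 ≫ g)
  let e : P ⟶ T1 ⨯ T2 := equalizer.ι _ _
  have htrivP : NTrivial N P :=
    htriv.2.1 e inferInstance (hprod T1 T2 ht1 ht2)
  have hout : ∀ {Z : 𝒞} (x : P ⟶ Z), N x := by
    intro Z x
    have := hN (𝟙 P) x (Or.inl htrivP)
    simpa using this
  obtain ⟨ψ, hψ1, hψ2⟩ := huniv (e ≫ prod.fst ≫ b1) (e ≫ prod.snd ≫ b2) (hout _)
    (by
      have := equalizer.condition ((prod.fst : T1 ⨯ T2 ⟶ T1) ≫ b1 ≫ dl)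
        ((prod.snd : T1 ⨯ T2 ⟶ T2) ≫ b2 ≫ g)
      simpa only [Category.assoc] using this)
  have hcomm : prod.lift a1 a2 ≫ ((prod.fst : T1 ⨯ T2 ⟶ T1) ≫ b1 ≫ dl)
      = prod.lift a1 a2 ≫ ((prod.snd : T1 ⨯ T2 ⟶ T2) ≫ b2 ≫ g) := by
    have hL : a1 ≫ b1 ≫ dl = (m ≫ p) ≫ dl := by
      rw [← hf1]; simp [Category.assoc]
    have hR : a2 ≫ b2 ≫ g = (m ≫ q) ≫ g := by
      rw [← hf2]; simp [Category.assoc]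
    have : (m ≫ p) ≫ dl = (m ≫ q) ≫ g := by
      simp only [Category.assoc, hpq]
    simp only [prod.lift_fst_assoc, prod.lift_snd_assoc, hL, hR, this]
  let φ : T ⟶ P := equalizer.lift (prod.lift a1 a2) hcomm
  have hφe : φ ≫ e = prod.lift a1 a2 := equalizer.lift_ι _ _
  have hmp : m = φ ≫ ψ := by
    apply jm
    · rw [Category.assoc, hψ1, ← hf1, ← Category.assoc, hφe]
      exact (prod.lift_fst_assoc _ _ _).symm
    · rw [Category.assoc, hψ2, ← hf2, ← Category.assoc, hφe]
      exact (prod.lift_snd_assoc _ _ _).symm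
  rw [hmp]
  exact hN φ ψ (Or.inr (hout ψ))

/-- In a multi-pointed category with kernels, enough trivial
objects and `N`-trivial objects closed under binary products, the star-kernel
`Eq(λ)*` of the comparison morphism `λ` between the stars of the pullback
relations, together with its induced morphisms to `Eq(w)*` and `Eq(c)*`, is the
star of the pullback relation of `(ḡ, δ̄)`. -/
theorem statement11 [HasFiniteLimits 𝒞]
    (N : MorphismProperty 𝒞) (hN : IsIdeal N) (hker : HasNKernels N)
    (htriv : EnoughTrivialObjects N)
    (hprod : ∀ X Y : 𝒞, NTrivial N X → NTrivial N Y → NTrivial N (X ⨯ Y))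
    -- the commutative cube
    {W Y E A D B : 𝒞} (w : W ⟶ Y) (c : E ⟶ A) (d : D ⟶ B)
    (g : E ⟶ D) (f : A ⟶ B) (δ : W ⟶ D) (β : Y ⟶ B)
    (hw : IsRegEpi w) (hc : IsRegEpi c) (hd : IsRegEpi d)
    (hcomm1 : c ≫ f = g ≫ d) (hcomm2 : w ≫ β = δ ≫ d)
    {V U : 𝒞} (ν1 : V ⟶ W) (ν2 : V ⟶ E) (χ1 : U ⟶ Y) (χ2 : U ⟶ A)
    (hν : IsStarPullbackRel N δ g ν1 ν2) (hχ : IsStarPullbackRel N β f χ1 χ2)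
    (lam : V ⟶ U) (hlam1 : lam ≫ χ1 = ν1 ≫ w) (hlam2 : lam ≫ χ2 = ν2 ≫ c)
    -- the star-kernels of c, d, w and the induced morphisms ḡ and δ̄
    {SW SC SD : 𝒞} (sw1 sw2 : SW ⟶ W) (sc1 sc2 : SC ⟶ E) (sd1 sd2 : SD ⟶ D)
    (hsw : IsStarKernel N w sw1 sw2) (hsc : IsStarKernel N c sc1 sc2)
    (hsd : IsStarKernel N d sd1 sd2)
    (gbar : SC ⟶ SD) (hg1 : gbar ≫ sd1 = sc1 ≫ g) (hg2 : gbar ≫ sd2 = sc2 ≫ g)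
    (δbar : SW ⟶ SD) (hδ1 : δbar ≫ sd1 = sw1 ≫ δ) (hδ2 : δbar ≫ sd2 = sw2 ≫ δ)
    -- the star-kernel of λ and its induced morphisms to Eq(w)* and Eq(c)*
    {L : 𝒞} (l1 l2 : L ⟶ V) (hl : IsStarKernel N lam l1 l2)
    (u : L ⟶ SW) (hu1 : u ≫ sw1 = l1 ≫ ν1) (hu2 : u ≫ sw2 = l2 ≫ ν1)
    (v : L ⟶ SC) (hv1 : v ≫ sc1 = l1 ≫ ν2) (hv2 : v ≫ sc2 = l2 ≫ ν2) :
    IsStarPullbackRel N δbar gbar u v := by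
  have jmSW : ∀ {T : 𝒞} (a b : T ⟶ SW), a ≫ sw1 = b ≫ sw1 → a ≫ sw2 = b ≫ sw2 → a = b :=
    starKernel_jm hN hsw
  have jmSC : ∀ {T : 𝒞} (a b : T ⟶ SC), a ≫ sc1 = b ≫ sc1 → a ≫ sc2 = b ≫ sc2 → a = b :=
    starKernel_jm hN hsc
  have jmSD : ∀ {T : 𝒞} (a b : T ⟶ SD), a ≫ sd1 = b ≫ sd1 → a ≫ sd2 = b ≫ sd2 → a = b :=
    starKernel_jm hN hsd
  have jmV : ∀ {T : 𝒞} (a b : T ⟶ V), a ≫ ν1 = b ≫ ν1 → a ≫ ν2 = b ≫ ν2 → a = b :=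
    starPB_jm hN hν
  have jmU : ∀ {T : 𝒞} (a b : T ⟶ U), a ≫ χ1 = b ≫ χ1 → a ≫ χ2 = b ≫ χ2 → a = b :=
    starPB_jm hN hχ
  refine ⟨?_, ?_, ?_⟩
  · -- N u
    refine nmem_of_legs N hN htriv hprod w w sw1 sw2 hsw.2.1
      (fun x1 x2 hx hxe => ?_) jmSW u ?_ ?_
    · obtain ⟨z, hz, _⟩ := hsw.2.2 x1 x2 hx hxe
      exact ⟨z, hz⟩
    · rw [hu1]; exact hN l1 ν1 (Or.inl hl.1)
    · rw [hu2]; exact hN l2 ν1 (Or.inr hν.1)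
  · -- u ≫ δbar = v ≫ gbar
    apply jmSD
    · calc (u ≫ δbar) ≫ sd1 = u ≫ sw1 ≫ δ := by rw [Category.assoc, hδ1]
        _ = (l1 ≫ ν1) ≫ δ := by rw [← Category.assoc, hu1]
        _ = (l1 ≫ ν2) ≫ g := by simp only [Category.assoc, hν.2.1]
        _ = (v ≫ sc1) ≫ g := by rw [hv1]
        _ = (v ≫ gbar) ≫ sd1 := by simp only [Category.assoc, hg1]
    · calc (u ≫ δbar) ≫ sd2 = u ≫ sw2 ≫ δ := by rw [Category.assoc, hδ2]
        _ = (l2 ≫ ν1) ≫ δ := by rw [← Category.assoc, hu2]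
        _ = (l2 ≫ ν2) ≫ g := by simp only [Category.assoc, hν.2.1]
        _ = (v ≫ sc2) ≫ g := by rw [hv2]
        _ = (v ≫ gbar) ≫ sd2 := by simp only [Category.assoc, hg2]
  · -- universal property
    intro T t1 t2 hNt1 hteq
    have hkey1 : (t1 ≫ sw1) ≫ δ = (t2 ≫ sc1) ≫ g := by
      calc (t1 ≫ sw1) ≫ δ = t1 ≫ δbar ≫ sd1 := by
            rw [hδ1, Category.assoc]
        _ = (t1 ≫ δbar) ≫ sd1 := by rw [Category.assoc]
        _ = (t2 ≫ gbar) ≫ sd1 := by rw [hteq]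
        _ = t2 ≫ sc1 ≫ g := by rw [Category.assoc, hg1]
        _ = (t2 ≫ sc1) ≫ g := by rw [Category.assoc]
    have hkey2 : (t1 ≫ sw2) ≫ δ = (t2 ≫ sc2) ≫ g := by
      calc (t1 ≫ sw2) ≫ δ = t1 ≫ δbar ≫ sd2 := by
            rw [hδ2, Category.assoc]
        _ = (t1 ≫ δbar) ≫ sd2 := by rw [Category.assoc]
        _ = (t2 ≫ gbar) ≫ sd2 := by rw [hteq]
        _ = t2 ≫ sc2 ≫ g := by rw [Category.assoc, hg2]
        _ = (t2 ≫ sc2) ≫ g := by rw [Category.assoc]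
    obtain ⟨m1, ⟨hm11, hm12⟩, hm1u⟩ :=
      hν.2.2 (t1 ≫ sw1) (t2 ≫ sc1) (hN t1 sw1 (Or.inl hNt1)) hkey1
    obtain ⟨m2, ⟨hm21, hm22⟩, hm2u⟩ :=
      hν.2.2 (t1 ≫ sw2) (t2 ≫ sc2) (hN t1 sw2 (Or.inl hNt1)) hkey2
    have hNm1 : N m1 := by
      refine nmem_of_legs N hN htriv hprod δ g ν1 ν2 hν.2.1
        (fun x1 x2 hx hxe => ?_) jmV m1 ?_ ?_
      · obtain ⟨z, hz, _⟩ := hν.2.2 x1 x2 hx hxe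
        exact ⟨z, hz⟩
      · rw [hm11]; exact hN t1 sw1 (Or.inl hNt1)
      · rw [hm12]; exact hN t2 sc1 (Or.inr hsc.1)
    have hmlam : m1 ≫ lam = m2 ≫ lam := by
      apply jmU
      · calc (m1 ≫ lam) ≫ χ1 = m1 ≫ ν1 ≫ w := by
              rw [Category.assoc, hlam1]
          _ = (m1 ≫ ν1) ≫ w := by rw [Category.assoc]
          _ = (t1 ≫ sw1) ≫ w := by rw [hm11]
          _ = (t1 ≫ sw2) ≫ w := by simp only [Category.assoc, hsw.2.1]
          _ = (m2 ≫ ν1) ≫ w := by rw [hm21]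
          _ = m2 ≫ ν1 ≫ w := by rw [Category.assoc]
          _ = (m2 ≫ lam) ≫ χ1 := by rw [← hlam1, Category.assoc]
      · calc (m1 ≫ lam) ≫ χ2 = m1 ≫ ν2 ≫ c := by
              rw [Category.assoc, hlam2]
          _ = (m1 ≫ ν2) ≫ c := by rw [Category.assoc]
          _ = (t2 ≫ sc1) ≫ c := by rw [hm12]
          _ = (t2 ≫ sc2) ≫ c := by simp only [Category.assoc, hsc.2.1]
          _ = (m2 ≫ ν2) ≫ c := by rw [hm22]
          _ = m2 ≫ ν2 ≫ c := by rw [Category.assoc]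
          _ = (m2 ≫ lam) ≫ χ2 := by rw [← hlam2, Category.assoc]
    obtain ⟨h, ⟨hh1, hh2⟩, hhu⟩ := hl.2.2 m1 m2 hNm1 hmlam
    refine ⟨h, ⟨?_, ?_⟩, ?_⟩
    · apply jmSW
      · calc (h ≫ u) ≫ sw1 = h ≫ l1 ≫ ν1 := by rw [Category.assoc, hu1]
          _ = (h ≫ l1) ≫ ν1 := by rw [Category.assoc]
          _ = m1 ≫ ν1 := by rw [hh1]
          _ = t1 ≫ sw1 := hm11
      · calc (h ≫ u) ≫ sw2 = h ≫ l2 ≫ ν1 := by rw [Category.assoc, hu2]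
          _ = (h ≫ l2) ≫ ν1 := by rw [Category.assoc]
          _ = m2 ≫ ν1 := by rw [hh2]
          _ = t1 ≫ sw2 := hm21
    · apply jmSC
      · calc (h ≫ v) ≫ sc1 = h ≫ l1 ≫ ν2 := by rw [Category.assoc, hv1]
          _ = (h ≫ l1) ≫ ν2 := by rw [Category.assoc]
          _ = m1 ≫ ν2 := by rw [hh1]
          _ = t2 ≫ sc1 := hm12
      · calc (h ≫ v) ≫ sc2 = h ≫ l2 ≫ ν2 := by rw [Category.assoc, hv2]
          _ = (h ≫ l2) ≫ ν2 := by rw [Category.assoc]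
          _ = m2 ≫ ν2 := by rw [hh2]
          _ = t2 ≫ sc2 := hm22
    · intro h' ⟨hp1, hp2⟩
      have e1 : h' ≫ l1 = m1 := by
        apply hm1u
        refine ⟨?_, ?_⟩
        · rw [Category.assoc, ← hu1, ← Category.assoc, hp1]
        · rw [Category.assoc, ← hv1, ← Category.assoc, hp2]
      have e2 : h' ≫ l2 = m2 := by
        apply hm2u
        refine ⟨?_, ?_⟩
        · rw [Category.assoc, ← hu2, ← Category.assoc, hp1]
        · rw [Category.assoc, ← hv2, ← Category.assoc, hp2]
      exact hhu h' ⟨e1, e2⟩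

end Paper
end
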